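/- arXiv:2302.01625 — 7 statements merged into one kernel-verified Lean document; each statement's English description precedes it below -/
import Mathlib

section
/- Under the stated drift hypotheses, one has 0 < ρ < 1, and the process satisfies the exponential supermartingale conditions: for every n ∈ ℕ, almost surely on the event {X_n ≥ K} it holds that E[e^{η(X_{n+1} − X_n)} | 𝓕_n] ≤ ρ, and almost surely on the event {X_n < K} it holds that E[e^{η(X_{n+1} − K)} | 𝓕_n] ≤ D. -/
open MeasureTheory Filter Nat

set_option maxHeartbeats 1000000 in
lemma exp_tail_sum (y : ℝ) :
    ∑' n : ℕ, y ^ (n + 2) / ((n + 2)! : ℝ) = Real.exp y - 1 - y := by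
  have hs : Summable (fun n : ℕ => y ^ n / (n ! : ℝ)) := Real.summable_pow_div_factorial y
  have h1 : Summable (fun n : ℕ => y ^ (n + 1) / ((n + 1)! : ℝ)) :=
    (summable_nat_add_iff 1).2 hs
  have hexp : Real.exp y = ∑' n : ℕ, y ^ n / (n ! : ℝ) := by
    have := congrFun Real.exp_eq_exp_ℝ y
    rw [NormedSpace.exp_eq_tsum_div] at this
    exact this
  rw [hexp, Summable.tsum_eq_zero_add hs, Summable.tsum_eq_zero_add h1]
  simp [Nat.factorial]

set_option maxHeartbeats 1000000 in
lemma exp_quad_bound {b x : ℝ} (hb : 0 < b) (hx : |x| ≤ b) :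
    Real.exp x ≤ 1 + x + x ^ 2 / b ^ 2 * (Real.exp b - 1 - b) := by
  have hsx : Summable (fun n : ℕ => x ^ (n + 2) / ((n + 2)! : ℝ)) :=
    (summable_nat_add_iff 2).2 (Real.summable_pow_div_factorial x)
  have hsb : Summable (fun n : ℕ => b ^ (n + 2) / ((n + 2)! : ℝ)) :=
    (summable_nat_add_iff 2).2 (Real.summable_pow_div_factorial b)
  have hsb' : Summable (fun n : ℕ => x ^ 2 / b ^ 2 * (b ^ (n + 2) / ((n + 2)! : ℝ))) :=
    hsb.mul_left _
  have key : ∑' n : ℕ, x ^ (n + 2) / ((n + 2)! : ℝ)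
      ≤ ∑' n : ℕ, x ^ 2 / b ^ 2 * (b ^ (n + 2) / ((n + 2)! : ℝ)) := by
    refine Summable.tsum_le_tsum (fun n => ?_) hsx hsb'
    have hfac : (0 : ℝ) < ((n + 2)! : ℝ) := by positivity
    have heq : x ^ 2 / b ^ 2 * (b ^ (n + 2) / ((n + 2)! : ℝ))
        = (x ^ 2 * b ^ n) / ((n + 2)! : ℝ) := by
      field_simp
      ring
    rw [heq, div_le_div_iff_of_pos_right hfac]
    have h1 : x ^ (n + 2) ≤ |x| ^ (n + 2) := by
      rw [← abs_pow]; exact le_abs_self _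
    have h2 : |x| ^ (n + 2) ≤ x ^ 2 * b ^ n := by
      have he : |x| ^ (n + 2) = |x| ^ 2 * |x| ^ n := by ring
      rw [he, sq_abs]
      exact mul_le_mul_of_nonneg_left (pow_le_pow_left₀ (abs_nonneg x) hx n) (sq_nonneg x)
    exact h1.trans h2
  have hx' : Real.exp x - 1 - x ≤ x ^ 2 / b ^ 2 * (Real.exp b - 1 - b) := by
    rw [← exp_tail_sum x, ← exp_tail_sum b, ← tsum_mul_left]
    exact key
  linarith

set_option maxHeartbeats 2000000 in
theorem stmt_0
    {Ω : Type*} {m0 : MeasurableSpace Ω} {μ : Measure Ω} [IsProbabilityMeasure μ]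
    (ℱ : Filtration ℕ m0) (X : ℕ → Ω → ℝ) (hadp : Adapted ℱ X)
    (x0 : ℝ) (hX0 : ∀ᵐ ω ∂μ, X 0 ω = x0)
    (k ε K : ℝ) (hk : 0 < k) (hε0 : 0 < ε) (hεk : ε ≤ k)
    (hbdd : ∀ n : ℕ, ∀ᵐ ω ∂μ, |X (n + 1) ω - X n ω| ≤ k)
    (hdrift : ∀ n : ℕ, ∀ᵐ ω ∂μ, K ≤ X n ω →
      (μ[(fun ω' => X (n + 1) ω' - X n ω') | ℱ n]) ω ≤ -ε)
    (lam : ℝ) (hlam : 0 < lam)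
    (c η ρ D : ℝ)
    (hc : c = (Real.exp (lam * k) - 1 - lam * k) / lam ^ 2)
    (hη0 : 0 < η) (hηlt : η < min lam (ε / (2 * c)))
    (hρ : ρ = 1 - η * ε / 2)
    (hD : D = Real.exp (lam * k)) :
    (0 < ρ ∧ ρ < 1) ∧
    (∀ n : ℕ, ∀ᵐ ω ∂μ, K ≤ X n ω →
      (μ[(fun ω' => Real.exp (η * (X (n + 1) ω' - X n ω'))) | ℱ n]) ω ≤ ρ) ∧
    (∀ n : ℕ, ∀ᵐ ω ∂μ, X n ω < K →
      (μ[(fun ω' => Real.exp (η * (X (n + 1) ω' - K))) | ℱ n]) ω ≤ D) := by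
  have hu : 0 < lam * k := mul_pos hlam hk
  have hE : lam * k + 1 < Real.exp (lam * k) := Real.add_one_lt_exp (ne_of_gt hu)
  have hc0 : 0 < c := by
    rw [hc]
    apply _root_.div_pos (by linarith) (by positivity)
  have hηlam : η < lam := lt_of_lt_of_le hηlt (min_le_left _ _)
  have hηε : η < ε / (2 * c) := lt_of_lt_of_le hηlt (min_le_right _ _)
  have hηc : η * c < ε / 2 := by
    rw [lt_div_iff₀ (by positivity)] at hηε
    linarith
  -- quadratic lower bound on exp to get ρ > 0
  have hquad : 1 + lam * k + (lam * k) ^ 2 / 4 ≤ Real.exp (lam * k) := by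
    have h2 : Real.exp (lam * k) = Real.exp (lam * k / 2) * Real.exp (lam * k / 2) := by
      rw [← Real.exp_add]; ring_nf
    have h3 : lam * k / 2 + 1 ≤ Real.exp (lam * k / 2) := Real.add_one_le_exp _
    nlinarith [Real.exp_pos (lam * k / 2)]
  have hρ0 : 0 < ρ := by
    rw [hρ]
    have hceq : c * lam ^ 2 = Real.exp (lam * k) - 1 - lam * k := by
      rw [hc]; field_simp
    have h1 : η * ε < ε * ε / (2 * c) := by
      rw [lt_div_iff₀ (by positivity)]
      rw [lt_div_iff₀ (by positivity)] at hηε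
      nlinarith
    have h3 : ε * ε / (2 * c) ≤ 2 := by
      rw [div_le_iff₀ (by positivity)]
      have h4 : k * k ≤ 4 * c := by nlinarith [mul_pos hlam hlam, sq_nonneg lam]
      nlinarith
    linarith
  have hρ1 : ρ < 1 := by rw [hρ]; nlinarith
  have hXm : ∀ n, StronglyMeasurable[m0] (X n) := fun n => ((hadp n).mono (ℱ.le n) le_rfl).stronglyMeasurable
  -- a.e. boundedness of X n
  have hXbd : ∀ n : ℕ, ∀ᵐ ω ∂μ, |X n ω| ≤ |x0| + n * k := by
    intro n
    induction n with
    | zero =>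
      filter_upwards [hX0] with ω h0
      simp [h0]
    | succ n ih =>
      filter_upwards [ih, hbdd n] with ω h1 h2
      have : |X (n + 1) ω| ≤ |X n ω| + |X (n + 1) ω - X n ω| := by
        have := abs_add_le (X n ω) (X (n + 1) ω - X n ω)
        simpa using this
      push_cast
      nlinarith
  have hΔint : ∀ n : ℕ, Integrable (fun ω => X (n + 1) ω - X n ω) μ := by
    intro n
    refine Integrable.mono' (integrable_const k) ?_ ?_
    · exact ((hXm (n + 1)).sub (hXm n)).aestronglyMeasurable
    · filter_upwards [hbdd n] with ω h
      simpa [Real.norm_eq_abs] using h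
  refine ⟨⟨hρ0, hρ1⟩, ?_, ?_⟩
  · -- first supermartingale condition
    intro n
    set Δ : Ω → ℝ := fun ω => X (n + 1) ω - X n ω with hΔ
    set f : Ω → ℝ := fun ω => Real.exp (η * Δ ω) with hf
    set g : Ω → ℝ := (fun _ => 1 + η ^ 2 * c) + η • Δ with hg
    have hfint : Integrable f μ := by
      refine Integrable.mono' (integrable_const (Real.exp (η * k))) ?_ ?_
      · exact (Real.continuous_exp.comp_stronglyMeasurable
          (((hXm (n + 1)).sub (hXm n)).const_mul η)).aestronglyMeasurable
      · filter_upwards [hbdd n] with ω h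
        rw [Real.norm_eq_abs, abs_of_pos (Real.exp_pos _), Real.exp_le_exp]
        have : Δ ω ≤ k := (le_abs_self _).trans h
        exact mul_le_mul_of_nonneg_left this hη0.le
    have hgint : Integrable g μ := (integrable_const _).add ((hΔint n).smul η)
    have hfg : f ≤ᵐ[μ] g := by
      filter_upwards [hbdd n] with ω h
      have hxb : |η * Δ ω| ≤ lam * k := by
        rw [abs_mul, abs_of_pos hη0]
        calc η * |Δ ω| ≤ η * k := mul_le_mul_of_nonneg_left h hη0.le
          _ ≤ lam * k := by nlinarith
      have hb := exp_quad_bound hu hxb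
      have hpos : (0:ℝ) ≤ Real.exp (lam * k) - 1 - lam * k := by
        nlinarith [Real.add_one_le_exp (lam * k)]
      have h1 : (η * Δ ω) ^ 2 ≤ η ^ 2 * k ^ 2 := by
        have h2 : (Δ ω) ^ 2 ≤ k ^ 2 := by
          rw [← sq_abs]
          exact pow_le_pow_left₀ (abs_nonneg _) h 2
        nlinarith
      have hsq : (η * Δ ω) ^ 2 / (lam * k) ^ 2 * (Real.exp (lam * k) - 1 - lam * k)
          ≤ η ^ 2 * c := by
        have heq : η ^ 2 * c
            = η ^ 2 * k ^ 2 / (lam * k) ^ 2 * (Real.exp (lam * k) - 1 - lam * k) := by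
          rw [hc]; field_simp
        rw [heq]
        have h3 : (η * Δ ω) ^ 2 / (lam * k) ^ 2 ≤ η ^ 2 * k ^ 2 / (lam * k) ^ 2 := by
          gcongr
        exact mul_le_mul_of_nonneg_right h3 hpos
      simp only [hf, hg, Pi.add_apply, Pi.smul_apply, smul_eq_mul]
      calc Real.exp (η * Δ ω)
          ≤ 1 + η * Δ ω + (η * Δ ω) ^ 2 / (lam * k) ^ 2 * (Real.exp (lam * k) - 1 - lam * k) :=
            hb
        _ ≤ 1 + η ^ 2 * c + η * Δ ω := by linarith
    have hmono := condExp_mono (m := ℱ n) hfint hgint hfg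
    have hgval : μ[g|ℱ n] =ᵐ[μ] fun ω => (1 + η ^ 2 * c) + η * (μ[Δ|ℱ n]) ω := by
      calc μ[g|ℱ n] =ᵐ[μ] μ[(fun _ => 1 + η ^ 2 * c)|ℱ n] + μ[η • Δ|ℱ n] := by
            rw [hg]
            exact condExp_add (integrable_const _) ((hΔint n).smul η) _
        _ =ᵐ[μ] fun ω => (1 + η ^ 2 * c) + η * (μ[Δ|ℱ n]) ω := by
            have h1 := condExp_smul (μ := μ) (m := ℱ n) η Δ
            filter_upwards [h1] with ω hω
            simp [Pi.add_apply, condExp_const (ℱ.le n), hω, Pi.smul_apply, smul_eq_mul]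
    filter_upwards [hmono, hgval, hdrift n] with ω h1 h2 h3 hK
    have h4 := h3 hK
    rw [← hΔ] at h4
    have : (μ[f|ℱ n]) ω ≤ (1 + η ^ 2 * c) + η * (μ[Δ|ℱ n]) ω := h1.trans_eq h2
    have h5 : η * (μ[Δ|ℱ n]) ω ≤ η * (-ε) := mul_le_mul_of_nonneg_left h4 hη0.le
    have : (μ[f|ℱ n]) ω ≤ 1 + η ^ 2 * c - η * ε := by linarith
    rw [hρ]
    simp only [hf, hΔ] at this
    nlinarith
  · -- second condition
    intro n
    set h : Ω → ℝ := fun ω' => Real.exp (η * (X (n + 1) ω' - K)) with hh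
    set H : Ω → ℝ := fun ω' => Real.exp (η * k) * Real.exp (η * (X n ω' - K)) with hH
    have hhle : h ≤ᵐ[μ] H := by
      filter_upwards [hbdd n] with ω hb
      have : η * (X (n + 1) ω - K) = η * (X (n + 1) ω - X n ω) + η * (X n ω - K) := by ring
      simp only [hh, hH, this, Real.exp_add]
      have h1 : Real.exp (η * (X (n + 1) ω - X n ω)) ≤ Real.exp (η * k) := by
        rw [Real.exp_le_exp]
        exact mul_le_mul_of_nonneg_left ((le_abs_self _).trans hb) hη0.le
      exact mul_le_mul_of_nonneg_right h1 (Real.exp_pos _).le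
    have hhint : Integrable h μ := by
      refine Integrable.mono' (integrable_const (Real.exp (η * (|x0| + (n + 1) * k + |K|)))) ?_ ?_
      · exact (Real.continuous_exp.comp_stronglyMeasurable
          (((hXm (n + 1)).sub stronglyMeasurable_const).const_mul η)).aestronglyMeasurable
      · filter_upwards [hXbd (n + 1)] with ω hω
        push_cast at hω
        rw [Real.norm_eq_abs, abs_of_pos (Real.exp_pos _), Real.exp_le_exp]
        have : X (n + 1) ω - K ≤ |x0| + (n + 1) * k + |K| := by
          have h1 : X (n + 1) ω ≤ |x0| + (n + 1) * k := (le_abs_self _).trans hω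
          have h2 : -K ≤ |K| := neg_le_abs K
          push_cast at h1 ⊢
          linarith
        exact mul_le_mul_of_nonneg_left this hη0.le
    have hHint : Integrable H μ := by
      refine Integrable.mono'
        (integrable_const (Real.exp (η * k) * Real.exp (η * (|x0| + n * k + |K|)))) ?_ ?_
      · exact (stronglyMeasurable_const.mul (Real.continuous_exp.comp_stronglyMeasurable
          (((hXm n).sub stronglyMeasurable_const).const_mul η))).aestronglyMeasurable
      · filter_upwards [hXbd n] with ω hω
        rw [Real.norm_eq_abs, abs_of_pos (by positivity)]
        have h3 : Real.exp (η * (X n ω - K)) ≤ Real.exp (η * (|x0| + n * k + |K|)) := by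
          rw [Real.exp_le_exp]
          have h1 : X n ω ≤ |x0| + n * k := (le_abs_self _).trans hω
          have h2 : -K ≤ |K| := neg_le_abs K
          exact mul_le_mul_of_nonneg_left (by linarith) hη0.le
        exact mul_le_mul_of_nonneg_left h3 (Real.exp_pos _).le
    have hHmeas : StronglyMeasurable[ℱ n] H :=
      stronglyMeasurable_const.mul (Real.continuous_exp.comp_stronglyMeasurable
        (((hadp n).stronglyMeasurable.sub stronglyMeasurable_const).const_mul η))
    have hHcond : μ[H|ℱ n] = H := condExp_of_stronglyMeasurable (ℱ.le n) hHmeas hHint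
    have hmono := condExp_mono (m := ℱ n) hhint hHint hhle
    filter_upwards [hmono] with ω h1 hK
    have h2 : (μ[h|ℱ n]) ω ≤ H ω := by rw [← hHcond]; exact h1
    have h3 : H ω ≤ D := by
      rw [hD]
      have e1 : Real.exp (η * (X n ω - K)) ≤ 1 := by
        rw [Real.exp_le_one_iff]
        have : X n ω - K < 0 := by linarith
        nlinarith
      have e2 : Real.exp (η * k) ≤ Real.exp (lam * k) := by
        rw [Real.exp_le_exp]; nlinarith
      calc H ω ≤ Real.exp (η * k) * 1 :=
            mul_le_mul_of_nonneg_left e1 (Real.exp_pos _).le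
        _ ≤ Real.exp (lam * k) := by rw [mul_one]; exact e2
    exact h2.trans h3
end

section
/- Under the stated drift hypotheses, for all m, n ∈ ℕ, almost surely E[e^{η X_{m+n}} | 𝓕_m] ≤ ρ^n e^{η X_m} + ((1 − ρ^n)/(1 − ρ)) · D e^{η K}. -/
private lemma real_exp_tsum (x : ℝ) : Real.exp x = ∑' n : ℕ, x ^ n / n.factorial := by
  rw [Real.exp_eq_exp_ℝ, NormedSpace.exp_eq_tsum_div]

private lemma exp_tail_eq (x : ℝ) :
    Real.exp x - 1 - x = ∑' n : ℕ, x ^ (n + 2) / (n + 2).factorial := by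
  have h := (Real.summable_pow_div_factorial x).sum_add_tsum_nat_add 2
  rw [real_exp_tsum x, ← h]
  simp [Finset.sum_range_succ]
  ring

private lemma exp_taylor_bound {a t : ℝ} (ha : 0 < a) (ht0 : 0 ≤ t) (hta : t ≤ a) :
    Real.exp t ≤ 1 + t + t ^ 2 / a ^ 2 * (Real.exp a - 1 - a) := by
  have hsum : ∀ x : ℝ, Summable (fun n : ℕ => x ^ (n + 2) / (n + 2).factorial) := fun x =>
    (summable_nat_add_iff 2).2 (Real.summable_pow_div_factorial x)
  have key : ∀ n : ℕ, t ^ (n + 2) / (n + 2).factorial ≤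
      t ^ 2 / a ^ 2 * (a ^ (n + 2) / (n + 2).factorial) := by
    intro n
    have h1 : t ^ (n + 2) ≤ t ^ 2 * a ^ n := by
      calc t ^ (n + 2) = t ^ 2 * t ^ n := by ring
        _ ≤ t ^ 2 * a ^ n := by
            exact mul_le_mul_of_nonneg_left (pow_le_pow_left₀ ht0 hta n) (sq_nonneg t)
    have h2 : t ^ 2 / a ^ 2 * (a ^ (n + 2) / (n + 2).factorial) =
        t ^ 2 * a ^ n / (n + 2).factorial := by
      field_simp
      ring
    rw [h2]
    have : (0:ℝ) < (n + 2).factorial := by positivity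
    exact div_le_div_of_nonneg_right h1 this.le |>.trans_eq rfl
  have hle : (∑' n : ℕ, t ^ (n + 2) / (n + 2).factorial) ≤
      ∑' n : ℕ, t ^ 2 / a ^ 2 * (a ^ (n + 2) / (n + 2).factorial) :=
    Summable.tsum_le_tsum key (hsum t) ((hsum a).mul_left _)
  rw [tsum_mul_left, ← exp_tail_eq a] at hle
  rw [← exp_tail_eq t] at hle
  linarith

private lemma exp_neg_quadratic {t : ℝ} (ht : t ≤ 0) : Real.exp t ≤ 1 + t + t ^ 2 / 2 := by
  set s := -t with hs
  have hs0 : 0 ≤ s := by linarith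
  have h1 : 1 + s + s ^ 2 / 2 ≤ Real.exp s := Real.quadratic_le_exp_of_nonneg hs0
  have hprod : Real.exp t * Real.exp s = 1 := by
    rw [← Real.exp_add]; simp [hs]
  have hq : (0:ℝ) < 1 - s + s ^ 2 / 2 := by nlinarith [sq_nonneg (s - 1)]
  have h2 : (1:ℝ) ≤ Real.exp s * (1 - s + s ^ 2 / 2) := by
    nlinarith [sq_nonneg (s ^ 2)]
  have heq : 1 + t + t ^ 2 / 2 = 1 - s + s ^ 2 / 2 := by rw [hs]; ring
  rw [heq]
  nlinarith [Real.exp_pos s, Real.exp_pos t]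

private lemma key_ineq {a t : ℝ} (ha : 0 < a) (hta : |t| ≤ a) :
    Real.exp t ≤ 1 + t + t ^ 2 / a ^ 2 * (Real.exp a - 1 - a) := by
  rcases le_or_gt 0 t with h | h
  · exact exp_taylor_bound ha h ((le_abs_self t).trans hta)
  · have h1 := exp_neg_quadratic h.le
    have h2 : a ^ 2 / 2 ≤ Real.exp a - 1 - a := by
      nlinarith [Real.quadratic_le_exp_of_nonneg ha.le]
    have h3 : t ^ 2 / 2 ≤ t ^ 2 / a ^ 2 * (Real.exp a - 1 - a) := by
      have ht2 : t ^ 2 = t ^ 2 / a ^ 2 * a ^ 2 := by field_simp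
      have hnn : 0 ≤ t ^ 2 / a ^ 2 := by positivity
      nlinarith
    linarith

open MeasureTheory Filter

set_option maxHeartbeats 1000000 in
theorem stmt_1
    {Ω : Type*} {m0 : MeasurableSpace Ω} {μ : Measure Ω} [IsProbabilityMeasure μ]
    (ℱ : Filtration ℕ m0) (X : ℕ → Ω → ℝ) (hadp : Adapted ℱ X)
    (x0 : ℝ) (hX0 : ∀ᵐ ω ∂μ, X 0 ω = x0)
    (k ε K : ℝ) (hk : 0 < k) (hε0 : 0 < ε) (hεk : ε ≤ k)
    (hbdd : ∀ n : ℕ, ∀ᵐ ω ∂μ, |X (n + 1) ω - X n ω| ≤ k)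
    (hdrift : ∀ n : ℕ, ∀ᵐ ω ∂μ, K ≤ X n ω →
      (μ[(fun ω' => X (n + 1) ω' - X n ω') | ℱ n]) ω ≤ -ε)
    (lam : ℝ) (hlam : 0 < lam)
    (c η ρ D : ℝ)
    (hc : c = (Real.exp (lam * k) - 1 - lam * k) / lam ^ 2)
    (hη0 : 0 < η) (hηlt : η < min lam (ε / (2 * c)))
    (hρ : ρ = 1 - η * ε / 2)
    (hD : D = Real.exp (lam * k)) :
    ∀ m n : ℕ, ∀ᵐ ω ∂μ,
      (μ[(fun ω' => Real.exp (η * X (m + n) ω')) | ℱ m]) ω ≤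
        ρ ^ n * Real.exp (η * X m ω) + ((1 - ρ ^ n) / (1 - ρ)) * (D * Real.exp (η * K)) := by
  -- constants
  have hηlam : η < lam := lt_of_lt_of_le hηlt (min_le_left _ _)
  have hlk : 0 < lam * k := by positivity
  have hcpos : 0 < c := by
    rw [hc]
    have h := Real.add_one_lt_exp (x := lam * k) (by positivity)
    have : 0 < Real.exp (lam * k) - 1 - lam * k := by linarith
    positivity
  have hηc : η < ε / (2 * c) := lt_of_lt_of_le hηlt (min_le_right _ _)
  have hcη : 2 * c * η < ε := by
    rw [lt_div_iff₀ (by positivity)] at hηc; linarith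
  have hck : k ^ 2 / 2 ≤ c := by
    rw [hc, le_div_iff₀ (by positivity)]
    nlinarith [Real.quadratic_le_exp_of_nonneg hlk.le]
  have hρlt1 : ρ < 1 := by rw [hρ]; nlinarith
  have hρpos : 0 < ρ := by
    rw [hρ]
    have h2c : ε ^ 2 ≤ 2 * c := by nlinarith
    nlinarith [mul_le_mul_of_nonneg_left h2c hη0.le]
  have h1ρ : 0 < 1 - ρ := by linarith
  have hDpos : 0 < D := by rw [hD]; exact Real.exp_pos _
  -- measurability & integrability
  have hXm : ∀ n, StronglyMeasurable (X n) := fun n => ((hadp n).mono (ℱ.le n) le_rfl).stronglyMeasurable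
  have hmeas : ∀ n, StronglyMeasurable[ℱ n] fun ω => Real.exp (η * X n ω) := fun n =>
    Real.continuous_exp.comp_stronglyMeasurable ((hadp n).const_mul η).stronglyMeasurable
  have hbX : ∀ n, ∀ᵐ ω ∂μ, |X n ω| ≤ |x0| + n * k := by
    intro n
    induction n with
    | zero => filter_upwards [hX0] with ω h; simp [h]
    | succ n ih =>
      filter_upwards [ih, hbdd n] with ω h1 h2
      have h3 : |X (n + 1) ω| ≤ |X n ω| + |X (n + 1) ω - X n ω| := by
        calc |X (n + 1) ω| = |X n ω + (X (n + 1) ω - X n ω)| := by ring_nf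
          _ ≤ |X n ω| + |X (n + 1) ω - X n ω| := abs_add_le _ _
      push_cast
      linarith
  have hint : ∀ n, Integrable (fun ω => Real.exp (η * X n ω)) μ := by
    intro n
    refine Integrable.mono' (integrable_const (Real.exp (η * (|x0| + n * k))))
      (Real.continuous_exp.comp_stronglyMeasurable ((hXm n).const_mul η)).aestronglyMeasurable ?_
    filter_upwards [hbX n] with ω h
    rw [Real.norm_eq_abs, Real.abs_exp]
    exact Real.exp_le_exp.2 (mul_le_mul_of_nonneg_left ((le_abs_self _).trans h) hη0.le)
  have hYm : ∀ n, StronglyMeasurable fun ω => X (n + 1) ω - X n ω := fun n =>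
    (hXm (n + 1)).sub (hXm n)
  have hYint : ∀ n, Integrable (fun ω => X (n + 1) ω - X n ω) μ := by
    intro n
    refine Integrable.mono' (integrable_const k) (hYm n).aestronglyMeasurable ?_
    filter_upwards [hbdd n] with ω h using h
  have hgm : ∀ n, StronglyMeasurable fun ω => Real.exp (η * (X (n + 1) ω - X n ω)) := fun n =>
    Real.continuous_exp.comp_stronglyMeasurable ((hYm n).const_mul η)
  have hgint : ∀ n, Integrable (fun ω => Real.exp (η * (X (n + 1) ω - X n ω))) μ := by
    intro n
    refine Integrable.mono' (integrable_const (Real.exp (η * k))) (hgm n).aestronglyMeasurable ?_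
    filter_upwards [hbdd n] with ω h
    rw [Real.norm_eq_abs, Real.abs_exp]
    exact Real.exp_le_exp.2 (mul_le_mul_of_nonneg_left ((le_abs_self _).trans h) hη0.le)
  -- one-step bound
  have hstep : ∀ n : ℕ, ∀ᵐ ω ∂μ,
      (μ[(fun ω' => Real.exp (η * X (n + 1) ω')) | ℱ n]) ω ≤
        ρ * Real.exp (η * X n ω) + D * Real.exp (η * K) := by
    intro n
    set f : Ω → ℝ := fun ω => Real.exp (η * X n ω) with hf
    set g : Ω → ℝ := fun ω => Real.exp (η * (X (n + 1) ω - X n ω)) with hg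
    have hfg : (fun ω' => Real.exp (η * X (n + 1) ω')) = f * g := by
      funext ω
      simp only [f, g, Pi.mul_apply, ← Real.exp_add]
      ring_nf
    have hpull : μ[f * g | ℱ n] =ᵐ[μ] f * μ[g | ℱ n] :=
      condExp_mul_of_stronglyMeasurable_left (hmeas n) (hfg ▸ hint (n + 1)) (hgint n)
    -- bound on μ[g | ℱ n]
    set W : Ω → ℝ := fun ω => (1 + c * η ^ 2) + η * (X (n + 1) ω - X n ω) with hW
    have hWint : Integrable W μ := (integrable_const _).add ((hYint n).const_mul η)
    have hgW : g ≤ᵐ[μ] W := by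
      filter_upwards [hbdd n] with ω hω
      have hky : |η * (X (n + 1) ω - X n ω)| ≤ lam * k := by
        rw [abs_mul, abs_of_pos hη0]
        calc η * |X (n + 1) ω - X n ω| ≤ η * k := by nlinarith
          _ ≤ lam * k := by nlinarith
      have h1 := key_ineq hlk hky
      rw [← hD] at h1
      have hY2 : (X (n + 1) ω - X n ω) ^ 2 ≤ k ^ 2 := by
        have h := abs_le.mp hω
        exact sq_le_sq' (by linarith [h.1]) h.2
      have ht2 : (η * (X (n + 1) ω - X n ω)) ^ 2 ≤ η ^ 2 * k ^ 2 := by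
        calc (η * (X (n + 1) ω - X n ω)) ^ 2 = η ^ 2 * (X (n + 1) ω - X n ω) ^ 2 := by ring
          _ ≤ η ^ 2 * k ^ 2 := mul_le_mul_of_nonneg_left hY2 (sq_nonneg η)
      have h2 : (η * (X (n + 1) ω - X n ω)) ^ 2 / (lam * k) ^ 2 ≤ η ^ 2 / lam ^ 2 := by
        rw [div_le_div_iff₀ (by positivity) (by positivity)]
        calc (η * (X (n + 1) ω - X n ω)) ^ 2 * lam ^ 2 ≤ (η ^ 2 * k ^ 2) * lam ^ 2 :=
              mul_le_mul_of_nonneg_right ht2 (sq_nonneg lam)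
          _ = η ^ 2 * (lam * k) ^ 2 := by ring
      have hDc : 0 ≤ D - 1 - lam * k := by
        rw [hD]; nlinarith [Real.add_one_le_exp (lam * k)]
      have h3 : (η * (X (n + 1) ω - X n ω)) ^ 2 / (lam * k) ^ 2 * (D - 1 - lam * k) ≤
          η ^ 2 / lam ^ 2 * (D - 1 - lam * k) := mul_le_mul_of_nonneg_right h2 hDc
      have hcc : η ^ 2 / lam ^ 2 * (D - 1 - lam * k) = c * η ^ 2 := by
        rw [hc, hD]; field_simp
      simp only [g, W]
      calc Real.exp (η * (X (n + 1) ω - X n ω)) ≤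
          1 + η * (X (n + 1) ω - X n ω) +
            (η * (X (n + 1) ω - X n ω)) ^ 2 / (lam * k) ^ 2 * (D - 1 - lam * k) := h1
        _ ≤ 1 + η * (X (n + 1) ω - X n ω) + c * η ^ 2 := by rw [← hcc]; linarith
        _ = (1 + c * η ^ 2) + η * (X (n + 1) ω - X n ω) := by ring
    have hcondW : μ[W | ℱ n] =ᵐ[μ]
        fun ω => (1 + c * η ^ 2) +
          η * (μ[(fun ω' => X (n + 1) ω' - X n ω') | ℱ n]) ω := by
      have h1 : W = (fun _ => (1 + c * η ^ 2)) +
          (η • fun ω' => X (n + 1) ω' - X n ω') := by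
        funext ω; simp [W, smul_eq_mul]
      rw [h1]
      refine (condExp_add (integrable_const _) ((hYint n).smul η) (ℱ n)).trans ?_
      have h2 := condExp_smul (μ := μ) (m := ℱ n) η (fun ω' => X (n + 1) ω' - X n ω')
      filter_upwards [h2] with ω hω
      simp [condExp_const (ℱ.le n), hω, smul_eq_mul]
    have hgmono : μ[g | ℱ n] ≤ᵐ[μ] μ[W | ℱ n] := condExp_mono (hgint n) hWint hgW
    have hgnn : 0 ≤ᵐ[μ] μ[g | ℱ n] :=
      condExp_nonneg (Eventually.of_forall fun ω => (Real.exp_pos _).le)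
    have hgD : μ[g | ℱ n] ≤ᵐ[μ] fun _ => D := by
      have h1 : g ≤ᵐ[μ] fun _ => D := by
        filter_upwards [hbdd n] with ω hω
        rw [hD]
        refine Real.exp_le_exp.2 ?_
        calc η * (X (n + 1) ω - X n ω) ≤ η * k := by nlinarith [le_abs_self (X (n + 1) ω - X n ω)]
          _ ≤ lam * k := by nlinarith
      have := condExp_mono (m := (ℱ n : MeasurableSpace Ω)) (hgint n) (integrable_const D) h1
      rwa [condExp_const (ℱ.le n)] at this
    rw [hfg]
    filter_upwards [hpull, hgmono, hcondW, hgnn, hgD, hdrift n] with ω h1 h2 h3 h4 h5 h6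
    rw [h1]
    rcases le_or_gt K (X n ω) with hK | hK
    · -- drift case
      have h7 : (μ[g | ℱ n]) ω ≤ ρ := by
        rw [hρ]
        have := h6 hK
        calc (μ[g | ℱ n]) ω ≤ (μ[W | ℱ n]) ω := h2
          _ = (1 + c * η ^ 2) + η * (μ[(fun ω' => X (n + 1) ω' - X n ω') | ℱ n]) ω := h3
          _ ≤ (1 + c * η ^ 2) + η * (-ε) := by nlinarith
          _ ≤ 1 - η * ε / 2 := by nlinarith
      have hfnn : 0 ≤ f ω := (Real.exp_pos _).le
      have : f ω * (μ[g | ℱ n]) ω ≤ ρ * f ω := by nlinarith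
      have hpos : 0 ≤ D * Real.exp (η * K) := by positivity
      simpa [Pi.mul_apply] using le_trans this (by linarith)
    · -- below K
      have h7 : f ω ≤ Real.exp (η * K) :=
        Real.exp_le_exp.2 (mul_le_mul_of_nonneg_left hK.le hη0.le)
      have h8 : f ω * (μ[g | ℱ n]) ω ≤ Real.exp (η * K) * D :=
        mul_le_mul h7 h5 h4 (Real.exp_pos _).le
      have h9 : 0 ≤ ρ * f ω := by positivity
      simp only [Pi.mul_apply]
      nlinarith
  -- main induction
  intro m n
  induction n with
  | zero =>
    rw [Nat.add_zero,
      condExp_of_stronglyMeasurable (ℱ.le m) (hmeas m) (hint m)]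
    refine Eventually.of_forall fun ω => ?_
    simp
  | succ n ih =>
    have hle : (ℱ m : MeasurableSpace Ω) ≤ ℱ (m + n) := ℱ.mono (Nat.le_add_right m n)
    have htower : μ[(fun ω' => Real.exp (η * X (m + (n + 1)) ω')) | ℱ m] =ᵐ[μ]
        μ[μ[(fun ω' => Real.exp (η * X (m + (n + 1)) ω')) | ℱ (m + n)] | ℱ m] :=
      (condExp_condExp_of_le hle (ℱ.le (m + n))).symm
    have hstep' : μ[(fun ω' => Real.exp (η * X (m + (n + 1)) ω')) | ℱ (m + n)] ≤ᵐ[μ]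
        fun ω => ρ * Real.exp (η * X (m + n) ω) + D * Real.exp (η * K) := by
      exact hstep (m + n)
    have hBint : Integrable (fun ω => ρ * Real.exp (η * X (m + n) ω) + D * Real.exp (η * K)) μ :=
      ((hint (m + n)).const_mul ρ).add (integrable_const _)
    have hmono : μ[μ[(fun ω' => Real.exp (η * X (m + (n + 1)) ω')) | ℱ (m + n)] | ℱ m] ≤ᵐ[μ]
        μ[(fun ω => ρ * Real.exp (η * X (m + n) ω) + D * Real.exp (η * K)) | ℱ m] :=
      condExp_mono integrable_condExp hBint hstep'
    have hlin : μ[(fun ω => ρ * Real.exp (η * X (m + n) ω) + D * Real.exp (η * K)) | ℱ m] =ᵐ[μ]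
        fun ω => ρ * (μ[(fun ω' => Real.exp (η * X (m + n) ω')) | ℱ m]) ω + D * Real.exp (η * K) := by
      have h1 : (fun ω => ρ * Real.exp (η * X (m + n) ω) + D * Real.exp (η * K)) =
          (ρ • fun ω => Real.exp (η * X (m + n) ω)) + (fun _ => D * Real.exp (η * K)) := by
        funext ω; simp [smul_eq_mul]
      rw [h1]
      refine (condExp_add ((hint (m + n)).smul ρ) (integrable_const _) (ℱ m)).trans ?_
      have h2 := condExp_smul (μ := μ) (m := ℱ m) ρ (fun ω' => Real.exp (η * X (m + n) ω'))
      filter_upwards [h2] with ω hω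
      simp [condExp_const (ℱ.le m), hω, smul_eq_mul]
    filter_upwards [htower, hmono, hlin, ih] with ω h1 h2 h3 h4
    rw [h1]
    have h5 : (μ[(fun ω => ρ * Real.exp (η * X (m + n) ω) + D * Real.exp (η * K)) | ℱ m]) ω ≤
        ρ * (ρ ^ n * Real.exp (η * X m ω) + (1 - ρ ^ n) / (1 - ρ) * (D * Real.exp (η * K))) +
          D * Real.exp (η * K) := by
      rw [h3]; nlinarith
    have hgeo : ρ * ((1 - ρ ^ n) / (1 - ρ)) + 1 = (1 - ρ ^ (n + 1)) / (1 - ρ) := by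
      field_simp
      ring
    calc (μ[μ[(fun ω' => Real.exp (η * X (m + (n + 1)) ω')) | ℱ (m + n)] | ℱ m]) ω ≤ _ := h2
      _ ≤ ρ * (ρ ^ n * Real.exp (η * X m ω) + (1 - ρ ^ n) / (1 - ρ) * (D * Real.exp (η * K))) +
          D * Real.exp (η * K) := h5
      _ = ρ ^ (n + 1) * Real.exp (η * X m ω) +
          (ρ * ((1 - ρ ^ n) / (1 - ρ)) + 1) * (D * Real.exp (η * K)) := by ring
      _ = ρ ^ (n + 1) * Real.exp (η * X m ω) +
          (1 - ρ ^ (n + 1)) / (1 - ρ) * (D * Real.exp (η * K)) := by rw [hgeo]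
end

section
/- Under the stated drift hypotheses, for all m, n ∈ ℕ and every M ∈ ℝ, almost surely P(X_{m+n} ≥ M | 𝓕_m) ≤ ρ^n e^{η(X_m − M)} + ((1 − ρ^n)/(1 − ρ)) · D e^{η(K − M)}. -/
open MeasureTheory Filter
open scoped Nat

lemma exp_sub_one_sub_eq' (y : ℝ) :
    Real.exp y - 1 - y = ∑' n : ℕ, y ^ (n + 2) / (n + 2)! := by
  have hs : Summable (fun n : ℕ => y ^ n / n !) := NormedSpace.expSeries_div_summable y
  have h0 : Real.exp y = ∑' n : ℕ, y ^ n / n ! := by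
    rw [Real.exp_eq_exp_ℝ, NormedSpace.exp_eq_tsum_div]
  have hs1 : Summable (fun n : ℕ => y ^ (n + 1) / (n + 1)!) :=
    (summable_nat_add_iff 1).2 hs
  have h1 := Summable.tsum_eq_zero_add hs
  have h2 := Summable.tsum_eq_zero_add hs1
  have h3 : ∑' n : ℕ, y ^ (n + 1 + 1) / ((n + 1 + 1)! : ℝ)
      = ∑' n : ℕ, y ^ (n + 2) / ((n + 2)! : ℝ) := by norm_num
  simp only [pow_zero, Nat.factorial_zero, pow_one, Nat.factorial_one, Nat.cast_one] at h1 h2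
  rw [h3] at h2
  rw [h0, h1, h2]
  simp [Nat.factorial_one]

lemma exp_quad' {a x : ℝ} (ha : 0 < a) (hx : |x| ≤ a) :
    Real.exp x ≤ 1 + x + x ^ 2 / a ^ 2 * (Real.exp a - 1 - a) := by
  have hsx : Summable (fun n : ℕ => x ^ (n + 2) / ((n + 2)! : ℝ)) :=
    (summable_nat_add_iff (f := fun n : ℕ => x ^ n / (n ! : ℝ)) 2).2
      (NormedSpace.expSeries_div_summable x)
  have hsa : Summable (fun n : ℕ => a ^ (n + 2) / ((n + 2)! : ℝ)) :=
    (summable_nat_add_iff (f := fun n : ℕ => a ^ n / (n ! : ℝ)) 2).2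
      (NormedSpace.expSeries_div_summable a)
  have key : ∀ n : ℕ, x ^ (n + 2) / ((n + 2)! : ℝ)
      ≤ x ^ 2 / a ^ 2 * (a ^ (n + 2) / ((n + 2)! : ℝ)) := by
    intro n
    have hfac : (0:ℝ) < ((n + 2)! : ℝ) := by positivity
    have h1 : x ^ (n + 2) ≤ x ^ 2 * a ^ n := by
      have hb1 : |x ^ (n + 2)| = |x| ^ 2 * |x| ^ n := by rw [abs_pow]; ring
      have hb2 : |x| ^ 2 * |x| ^ n ≤ |x| ^ 2 * a ^ n := by
        have := pow_le_pow_left₀ (abs_nonneg x) hx n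
        nlinarith [sq_nonneg |x|]
      have hb3 := le_abs_self (x ^ (n + 2))
      rw [hb1] at hb3
      rw [sq_abs] at hb2 hb3
      linarith
    have h2 : x ^ 2 / a ^ 2 * (a ^ (n + 2) / ((n + 2)! : ℝ))
        = x ^ 2 * a ^ n / ((n + 2)! : ℝ) := by
      field_simp
      ring
    rw [h2]
    exact div_le_div_of_nonneg_right h1 hfac.le
  have h := Summable.tsum_le_tsum key hsx (hsa.mul_left (x ^ 2 / a ^ 2))
  rw [tsum_mul_left] at h
  have e1 := exp_sub_one_sub_eq' x
  have e2 := exp_sub_one_sub_eq' a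
  rw [← e2] at h
  rw [← e1] at h
  linarith

lemma exp_quad_lower' {a : ℝ} (ha : 0 ≤ a) : a ^ 2 / 2 ≤ Real.exp a - 1 - a := by
  have hsa : Summable (fun n : ℕ => a ^ (n + 2) / ((n + 2)! : ℝ)) :=
    (summable_nat_add_iff 2).2 (NormedSpace.expSeries_div_summable a)
  have h := Summable.le_tsum hsa 0 (fun i _ => by positivity)
  rw [← exp_sub_one_sub_eq'] at h
  norm_num at h
  linarith

lemma condexp_const_mul' {Ω : Type*} {m m0 : MeasurableSpace Ω} {μ : Measure Ω}
    (c : ℝ) (f : Ω → ℝ) :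
    μ[fun ω => c * f ω|m] =ᵐ[μ] fun ω => c * (μ[f|m]) ω := by
  have h := condExp_smul (μ := μ) (m := m) c f
  have he : (fun ω => c * f ω) = c • f := by ext ω; simp [smul_eq_mul]
  rw [he]
  filter_upwards [h] with ω hω
  simpa using hω

lemma condexp_const_add' {Ω : Type*} {m m0 : MeasurableSpace Ω} (hm : m ≤ m0)
    {μ : Measure Ω} [IsFiniteMeasure μ] (c : ℝ) {f : Ω → ℝ} (hf : Integrable f μ) :
    μ[fun ω => c + f ω|m] =ᵐ[μ] fun ω => c + (μ[f|m]) ω := by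
  have h := condExp_add (μ := μ) (m := m) (integrable_const c) hf
  rw [condExp_const hm] at h
  have he : (fun ω => c + f ω) = (fun _ => c) + f := rfl
  rw [he]
  filter_upwards [h] with ω hω
  simpa using hω

set_option maxHeartbeats 2000000 in
theorem stmt_3
    {Ω : Type*} {m0 : MeasurableSpace Ω} {μ : Measure Ω} [IsProbabilityMeasure μ]
    (ℱ : Filtration ℕ m0) (X : ℕ → Ω → ℝ) (hadp : Adapted ℱ X)
    (x0 : ℝ) (hX0 : ∀ᵐ ω ∂μ, X 0 ω = x0)
    (k ε K : ℝ) (hk : 0 < k) (hε0 : 0 < ε) (hεk : ε ≤ k)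
    (hbdd : ∀ n : ℕ, ∀ᵐ ω ∂μ, |X (n + 1) ω - X n ω| ≤ k)
    (hdrift : ∀ n : ℕ, ∀ᵐ ω ∂μ, K ≤ X n ω →
      (μ[(fun ω' => X (n + 1) ω' - X n ω') | ℱ n]) ω ≤ -ε)
    (lam : ℝ) (hlam : 0 < lam)
    (c η ρ D : ℝ)
    (hc : c = (Real.exp (lam * k) - 1 - lam * k) / lam ^ 2)
    (hη0 : 0 < η) (hηlt : η < min lam (ε / (2 * c)))
    (hρ : ρ = 1 - η * ε / 2)
    (hD : D = Real.exp (lam * k)) :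
    ∀ m n : ℕ, ∀ M : ℝ, ∀ᵐ ω ∂μ,
      (μ[Set.indicator {ω' | M ≤ X (m + n) ω'} (fun _ => (1 : ℝ)) | ℱ m]) ω ≤
        ρ ^ n * Real.exp (η * (X m ω - M)) + ((1 - ρ ^ n) / (1 - ρ)) * (D * Real.exp (η * (K - M))) := by
  -- basic constants
  have hηlam : η < lam := lt_of_lt_of_le hηlt (min_le_left _ _)
  have hlk : 0 < lam * k := mul_pos hlam hk
  have hE : Real.exp (lam * k) - 1 - lam * k = c * lam ^ 2 := by
    rw [hc]; field_simp
  have hc2 : k ^ 2 / 2 ≤ c := by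
    have h := exp_quad_lower' hlk.le
    rw [hE] at h
    have h2 : (lam * k) ^ 2 / 2 = (k ^ 2 / 2) * lam ^ 2 := by ring
    rw [h2] at h
    have hl2 : (0:ℝ) < lam ^ 2 := by positivity
    exact le_of_mul_le_mul_right h hl2
  have hc0 : 0 < c := lt_of_lt_of_le (by positivity) hc2
  have hηc : η * c < ε / 2 := by
    have h := lt_of_lt_of_le hηlt (min_le_right _ _)
    rw [lt_div_iff₀ (by positivity)] at h
    linarith
  have hρ1 : ρ < 1 := by
    rw [hρ]; nlinarith
  have hρ0 : 0 < ρ := by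
    rw [hρ]
    nlinarith [mul_pos hη0 hε0, sq_nonneg (ε - k), sq_nonneg k]
  have hD1 : 1 ≤ D := by rw [hD]; exact Real.one_le_exp hlk.le
  have hD0 : 0 < D := lt_of_lt_of_le one_pos hD1
  -- a.e. boundedness of X n
  have hXb : ∀ n : ℕ, ∀ᵐ ω ∂μ, |X n ω| ≤ |x0| + n * k := by
    intro n
    induction n with
    | zero =>
      filter_upwards [hX0] with ω h
      simp [h]
    | succ n ih =>
      filter_upwards [ih, hbdd n] with ω h1 h2
      have h3 : |X (n + 1) ω| ≤ |X n ω| + |X (n + 1) ω - X n ω| := by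
        have := abs_add_le (X n ω) (X (n + 1) ω - X n ω)
        simpa using this
      push_cast
      linarith
  -- the exponential process
  set Y : ℕ → Ω → ℝ := fun n ω => Real.exp (η * X n ω) with hYdef
  have hYm : ∀ n, StronglyMeasurable[ℱ n] (Y n) := fun n =>
    Real.continuous_exp.comp_stronglyMeasurable ((hadp n).const_mul η).stronglyMeasurable
  have hYae : ∀ n, AEStronglyMeasurable (Y n) μ := fun n =>
    ((hYm n).mono (ℱ.le n)).aestronglyMeasurable
  have hYpos : ∀ n ω, 0 < Y n ω := fun n ω => Real.exp_pos _
  have hYint : ∀ n, Integrable (Y n) μ := by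
    intro n
    refine (integrable_const (Real.exp (η * (|x0| + n * k)))).mono' (hYae n) ?_
    filter_upwards [hXb n] with ω h
    rw [Real.norm_eq_abs, Real.abs_exp]
    exact Real.exp_le_exp.2 (mul_le_mul_of_nonneg_left (le_trans (le_abs_self _) h) hη0.le)
  have hXint : ∀ n, Integrable (X n) μ := by
    intro n
    refine (integrable_const (|x0| + n * k)).mono'
      (((hadp n).mono (ℱ.le n) le_rfl).aestronglyMeasurable) ?_
    filter_upwards [hXb n] with ω h
    rwa [Real.norm_eq_abs]
  have hΔint : ∀ n, Integrable (fun ω => X (n + 1) ω - X n ω) μ := fun n =>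
    (hXint (n + 1)).sub (hXint n)
  -- one-step drift bound
  have key : ∀ n, μ[Y (n + 1)|ℱ n] ≤ᵐ[μ]
      fun ω => ρ * Y n ω + D * Real.exp (η * K) := by
    intro n
    set Z : Ω → ℝ := fun ω => Real.exp (η * (X (n + 1) ω - X n ω)) with hZdef
    have hZsm : StronglyMeasurable Z :=
      Real.continuous_exp.comp_stronglyMeasurable
        ((((hadp (n + 1)).mono (ℱ.le (n + 1)) le_rfl).sub ((hadp n).mono (ℱ.le n) le_rfl)).const_mul η).stronglyMeasurable
    have hZbddD : ∀ᵐ ω ∂μ, Z ω ≤ D := by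
      filter_upwards [hbdd n] with ω hd
      rw [hD]
      refine Real.exp_le_exp.2 ?_
      have h1 : η * (X (n + 1) ω - X n ω) ≤ η * k :=
        mul_le_mul_of_nonneg_left (le_trans (le_abs_self _) hd) hη0.le
      nlinarith
    have hZint : Integrable Z μ := by
      refine (integrable_const D).mono' hZsm.aestronglyMeasurable ?_
      filter_upwards [hZbddD] with ω h
      rw [Real.norm_eq_abs, Real.abs_exp]
      exact h
    have hmul : Y (n + 1) = Y n * Z := by
      funext ω
      simp only [hYdef, hZdef, Pi.mul_apply]
      rw [← Real.exp_add]
      congr 1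
      ring
    have hpull : μ[Y (n + 1)|ℱ n] =ᵐ[μ] fun ω => Y n ω * (μ[Z|ℱ n]) ω := by
      rw [hmul]
      have := condExp_mul_of_stronglyMeasurable_left (hYm n)
        (by rw [← hmul]; exact hYint (n + 1)) hZint
      filter_upwards [this] with ω hω
      simpa using hω
    have hZD : μ[Z|ℱ n] ≤ᵐ[μ] fun _ => D := by
      have h := condExp_mono (m := ℱ n) hZint (integrable_const D) hZbddD
      rw [condExp_const (ℱ.le n)] at h
      exact h
    have hZnn : 0 ≤ᵐ[μ] μ[Z|ℱ n] :=
      condExp_nonneg (Eventually.of_forall fun ω => (Real.exp_pos _).le)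
    -- quadratic bound on Z
    have hquad : ∀ᵐ ω ∂μ, Z ω ≤ (1 + η ^ 2 * c) + η * (X (n + 1) ω - X n ω) := by
      filter_upwards [hbdd n] with ω hd
      set d := X (n + 1) ω - X n ω with hddef
      clear_value d
      have habs : |η * d| ≤ lam * k := by
        rw [abs_mul, abs_of_pos hη0]
        have h1 : η * |d| ≤ η * k := mul_le_mul_of_nonneg_left hd hη0.le
        nlinarith
      have h := exp_quad' hlk habs
      rw [hE] at h
      have h2 : (η * d) ^ 2 / (lam * k) ^ 2 * (c * lam ^ 2)
          = η ^ 2 * c * (d ^ 2 / k ^ 2) := by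
        field_simp
      rw [h2] at h
      have hd2 : d ^ 2 ≤ k ^ 2 := by nlinarith [le_trans (le_abs_self d) hd, neg_abs_le d]
      have h3 : η ^ 2 * c * (d ^ 2 / k ^ 2) ≤ η ^ 2 * c := by
        have hk2 : (0:ℝ) < k ^ 2 := by positivity
        have : d ^ 2 / k ^ 2 ≤ 1 := (div_le_one hk2).2 hd2
        nlinarith [sq_nonneg η, mul_nonneg (sq_nonneg η) hc0.le,
          div_nonneg (sq_nonneg d) hk2.le]
      simp only [hZdef]
      rw [← hddef]
      linarith
    have hWint : Integrable (fun ω => (1 + η ^ 2 * c) + η * (X (n + 1) ω - X n ω)) μ :=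
      (integrable_const _).add ((hΔint n).const_mul η)
    have hcond1 := condExp_mono (m := ℱ n) hZint hWint hquad
    have haff : μ[fun ω => (1 + η ^ 2 * c) + η * (X (n + 1) ω - X n ω)|ℱ n] =ᵐ[μ]
        fun ω => (1 + η ^ 2 * c) +
          η * (μ[fun ω' => X (n + 1) ω' - X n ω'|ℱ n]) ω := by
      have h1 := condexp_const_add' (ℱ.le n) (1 + η ^ 2 * c)
        (μ := μ) (f := fun ω => η * (X (n + 1) ω - X n ω)) ((hΔint n).const_mul η)
      have h2 := condexp_const_mul' (μ := μ) (m := ℱ n) η (fun ω => X (n + 1) ω - X n ω)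
      filter_upwards [h1, h2] with ω hω1 hω2
      rw [hω1, hω2]
    -- combine on the two events
    filter_upwards [hpull, hZD, hZnn, hcond1, haff, hdrift n] with ω h1 h2 h3 h4 h5 h6
    rw [h1]
    rcases le_or_gt K (X n ω) with hK | hK
    · have hcρ : (μ[Z|ℱ n]) ω ≤ ρ := by
        have h7 := h6 hK
        have h8 : (μ[Z|ℱ n]) ω ≤ (1 + η ^ 2 * c) +
            η * (μ[fun ω' => X (n + 1) ω' - X n ω'|ℱ n]) ω := by
          rw [← h5]; exact h4
        have h9 : η * (μ[fun ω' => X (n + 1) ω' - X n ω'|ℱ n]) ω ≤ η * (-ε) :=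
          mul_le_mul_of_nonneg_left h7 hη0.le
        rw [hρ]
        nlinarith
      have hY0 : 0 ≤ Y n ω := (hYpos n ω).le
      have := mul_le_mul_of_nonneg_left hcρ hY0
      nlinarith [mul_pos hD0 (Real.exp_pos (η * K))]
    · have hYK : Y n ω ≤ Real.exp (η * K) :=
        Real.exp_le_exp.2 (mul_le_mul_of_nonneg_left hK.le hη0.le)
      have hprod : Y n ω * (μ[Z|ℱ n]) ω ≤ Real.exp (η * K) * D :=
        mul_le_mul hYK h2 h3 (Real.exp_pos _).le
      nlinarith [mul_pos hρ0 (hYpos n ω)]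
  -- iterated bound
  have iter : ∀ m n : ℕ, μ[Y (m + n)|ℱ m] ≤ᵐ[μ]
      fun ω => ρ ^ n * Y m ω +
        (∑ i ∈ Finset.range n, ρ ^ i) * (D * Real.exp (η * K)) := by
    intro m n
    induction n with
    | zero =>
      rw [Nat.add_zero, condExp_of_stronglyMeasurable (ℱ.le m) (hYm m) (hYint m)]
      refine Eventually.of_forall fun ω => ?_
      simp
    | succ n ih =>
      have hle : ℱ m ≤ ℱ (m + n) := ℱ.mono (Nat.le_add_right m n)
      have htower : μ[Y (m + n + 1)|ℱ m]
          =ᵐ[μ] μ[μ[Y (m + n + 1)|ℱ (m + n)]|ℱ m] :=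
        (condExp_condExp_of_le hle (ℱ.le (m + n))).symm
      have hRint : Integrable (fun ω => ρ * Y (m + n) ω + D * Real.exp (η * K)) μ :=
        ((hYint (m + n)).const_mul ρ).add (integrable_const _)
      have h1 : μ[μ[Y (m + n + 1)|ℱ (m + n)]|ℱ m] ≤ᵐ[μ]
          μ[fun ω => ρ * Y (m + n) ω + D * Real.exp (η * K)|ℱ m] :=
        condExp_mono (m := ℱ m) integrable_condExp hRint (key (m + n))
      have h2 : μ[fun ω => ρ * Y (m + n) ω + D * Real.exp (η * K)|ℱ m] =ᵐ[μ]
          fun ω => ρ * (μ[Y (m + n)|ℱ m]) ω + D * Real.exp (η * K) := by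
        have ha : (fun ω => ρ * Y (m + n) ω + D * Real.exp (η * K))
            = fun ω => D * Real.exp (η * K) + ρ * Y (m + n) ω := by
          funext ω; ring
        rw [ha]
        have hb := condexp_const_add' (ℱ.le m) (D * Real.exp (η * K))
          (μ := μ) ((hYint (m + n)).const_mul ρ)
        have hcmul := condexp_const_mul' (μ := μ) (m := ℱ m) ρ (Y (m + n))
        filter_upwards [hb, hcmul] with ω hω1 hω2
        rw [hω1, hω2]
        ring
      have hmn : m + (n + 1) = m + n + 1 := by omega
      rw [hmn]
      filter_upwards [htower, h1, h2, ih] with ω hω1 hω2 hω3 hω4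
      rw [hω1]
      have h5 : ρ * (μ[Y (m + n)|ℱ m]) ω
          ≤ ρ * (ρ ^ n * Y m ω + (∑ i ∈ Finset.range n, ρ ^ i) * (D * Real.exp (η * K))) :=
        mul_le_mul_of_nonneg_left hω4 hρ0.le
      have hS : (∑ i ∈ Finset.range (n + 1), ρ ^ i)
          = ρ * (∑ i ∈ Finset.range n, ρ ^ i) + 1 := geom_sum_succ
      have hexp : ρ * (ρ ^ n * Y m ω + (∑ i ∈ Finset.range n, ρ ^ i) * (D * Real.exp (η * K)))
            + D * Real.exp (η * K)
          = ρ ^ (n + 1) * Y m ω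
            + (ρ * (∑ i ∈ Finset.range n, ρ ^ i) + 1) * (D * Real.exp (η * K)) := by
        rw [pow_succ]; ring
      rw [hS]
      calc (μ[fun ω => μ[Y (m + n + 1)|ℱ (m + n)] ω|ℱ m]) ω
          ≤ (μ[fun ω => ρ * Y (m + n) ω + D * Real.exp (η * K)|ℱ m]) ω := hω2
        _ = ρ * (μ[Y (m + n)|ℱ m]) ω + D * Real.exp (η * K) := hω3
        _ ≤ ρ * (ρ ^ n * Y m ω + (∑ i ∈ Finset.range n, ρ ^ i) * (D * Real.exp (η * K)))
            + D * Real.exp (η * K) := by linarith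
        _ = _ := hexp
  -- final step: Markov bound via the indicator
  intro m n M
  set S : Set Ω := {ω' | M ≤ X (m + n) ω'} with hSdef
  have hSmeas : MeasurableSet S :=
    measurableSet_le measurable_const ((hadp (m + n)).mono (ℱ.le (m + n)) le_rfl)
  have hIint : Integrable (S.indicator (fun _ => (1:ℝ))) μ :=
    (integrable_const 1).indicator hSmeas
  have hGint : Integrable (fun ω => Real.exp (-(η * M)) * Y (m + n) ω) μ :=
    (hYint (m + n)).const_mul _
  have hle : S.indicator (fun _ => (1:ℝ)) ≤ᵐ[μ]
      fun ω => Real.exp (-(η * M)) * Y (m + n) ω := by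
    refine Eventually.of_forall fun ω => ?_
    simp only [hYdef]
    rw [← Real.exp_add]
    by_cases hω : ω ∈ S
    · rw [Set.indicator_of_mem hω]
      refine Real.one_le_exp ?_
      have : M ≤ X (m + n) ω := hω
      nlinarith
    · rw [Set.indicator_of_notMem hω]
      exact (Real.exp_pos _).le
  have h1 := condExp_mono (m := ℱ m) hIint hGint hle
  have h2 := condexp_const_mul' (μ := μ) (m := ℱ m) (Real.exp (-(η * M))) (Y (m + n))
  have hgeom : (∑ i ∈ Finset.range n, ρ ^ i) = (1 - ρ ^ n) / (1 - ρ) := by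
    rw [geom_sum_eq hρ1.ne n]
    rw [← neg_div_neg_eq]
    ring_nf
  filter_upwards [h1, h2, iter m n] with ω hω1 hω2 hω3
  have h3 : (μ[S.indicator fun _ => (1:ℝ)|ℱ m]) ω
      ≤ Real.exp (-(η * M)) * (μ[Y (m + n)|ℱ m]) ω := by
    rw [← hω2]; exact hω1
  have h4 : Real.exp (-(η * M)) * (μ[Y (m + n)|ℱ m]) ω
      ≤ Real.exp (-(η * M)) * (ρ ^ n * Y m ω
        + (∑ i ∈ Finset.range n, ρ ^ i) * (D * Real.exp (η * K))) :=
    mul_le_mul_of_nonneg_left hω3 (Real.exp_pos _).le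
  have h5 : Real.exp (-(η * M)) * Y m ω = Real.exp (η * (X m ω - M)) := by
    rw [hYdef, ← Real.exp_add]
    congr 1
    ring
  have h6 : Real.exp (-(η * M)) * (D * Real.exp (η * K)) = D * Real.exp (η * (K - M)) := by
    rw [mul_comm (Real.exp (-(η * M))) (D * Real.exp (η * K)), mul_assoc, ← Real.exp_add]
    congr 2
    ring
  have h7 : Real.exp (-(η * M)) * (ρ ^ n * Y m ω
        + (∑ i ∈ Finset.range n, ρ ^ i) * (D * Real.exp (η * K)))
      = ρ ^ n * Real.exp (η * (X m ω - M))
        + ((1 - ρ ^ n) / (1 - ρ)) * (D * Real.exp (η * (K - M))) := by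
    rw [← hgeom, ← h5, ← h6]
    ring
  rw [← h7]
  exact le_trans h3 h4
end

section
/- Under the stated drift hypotheses, for all m, n ∈ ℕ, almost surely P(τ_{K,m} > n | 𝓕_m) ≤ e^{η(X_m − K)} · ρ^n. -/
open MeasureTheory Filter

section aux

lemma exp_sub_mono' {a b : ℝ} (ha : 0 ≤ a) (hab : a ≤ b) :
    Real.exp a - a ≤ Real.exp b - b := by
  have h1 : Real.exp (b - a) ≥ 1 + (b - a) := by
    have := Real.add_one_le_exp (b - a); linarith
  have h2 : Real.exp b = Real.exp a * Real.exp (b - a) := by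
    rw [← Real.exp_add]; ring_nf
  have h3 : (1 : ℝ) ≤ Real.exp a := Real.one_le_exp ha
  nlinarith [Real.exp_pos a]

lemma expA' {y b : ℝ} (hy : |y| ≤ b) :
    Real.exp y - 1 - y ≤ Real.exp b - 1 - b := by
  rcases le_or_gt 0 y with h | h
  · have hyb : y ≤ b := by rwa [abs_of_nonneg h] at hy
    have := exp_sub_mono' h hyb; linarith
  · set s := -y with hs
    have hs0 : 0 < s := by simp [hs]; linarith
    have hsb : s ≤ b := by rwa [abs_of_neg h] at hy
    have hsinh : s < Real.sinh s := Real.self_lt_sinh_iff.mpr hs0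
    rw [Real.sinh_eq] at hsinh
    have h2 : Real.exp y - y ≤ Real.exp s - s := by
      have : Real.exp y = Real.exp (-s) := by rw [hs]; simp
      rw [this]; nlinarith
    have := exp_sub_mono' hs0.le hsb
    linarith

lemma aux_h2' (x : ℝ) : 0 ≤ x * Real.exp x - Real.exp x + 1 := by
  have h1 := Real.add_one_le_exp (-x)
  have h2 : Real.exp (-x) * Real.exp x = 1 := by
    rw [← Real.exp_add]; simp
  nlinarith [Real.exp_pos x]

lemma aux_h1' {x : ℝ} (hx : 0 ≤ x) :
    0 ≤ x * (Real.exp x - 1) - 2 * (Real.exp x - 1 - x) := by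
  set F : ℝ → ℝ := fun x => x * (Real.exp x - 1) - 2 * (Real.exp x - 1 - x) with hF
  have hderiv : ∀ y : ℝ, HasDerivAt F (y * Real.exp y - Real.exp y + 1) y := by
    intro y
    have h1 : HasDerivAt (fun y : ℝ => y * (Real.exp y - 1))
        (1 * (Real.exp y - 1) + y * Real.exp y) y :=
      (hasDerivAt_id y).mul ((Real.hasDerivAt_exp y).sub_const 1)
    have h2 : HasDerivAt (fun y : ℝ => 2 * (Real.exp y - 1 - y))
        (2 * (Real.exp y - 1)) y := by
      have := ((Real.hasDerivAt_exp y).sub_const 1).sub (hasDerivAt_id y)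
      simpa using this.const_mul 2
    have := h1.sub h2
    convert this using 1
    · rfl
    · rfl
    · rfl
    ring
  have hmono : MonotoneOn F (Set.Ici (0:ℝ)) := by
    apply monotoneOn_of_deriv_nonneg (convex_Ici 0)
    · exact (Continuous.continuousOn (by continuity))
    · intro y hy
      exact (hderiv y).differentiableAt.differentiableWithinAt
    · intro y hy
      rw [(hderiv y).deriv]
      exact aux_h2' y
  have h0 : F 0 = 0 := by simp [hF]
  have := hmono (Set.self_mem_Ici) (Set.mem_Ici.mpr hx) hx
  rw [h0] at this
  exact this

lemma expB' {s t : ℝ} (hs : 0 < s) (hst : s ≤ t) :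
    (Real.exp s - 1 - s) * t ^ 2 ≤ (Real.exp t - 1 - t) * s ^ 2 := by
  set G : ℝ → ℝ := fun x => (Real.exp x - 1 - x) / x ^ 2 with hG
  have ht : 0 < t := lt_of_lt_of_le hs hst
  have hmono : MonotoneOn G (Set.Ioi (0:ℝ)) := by
    apply monotoneOn_of_deriv_nonneg (convex_Ioi 0)
    · apply ContinuousOn.div
      · exact Continuous.continuousOn (by continuity)
      · exact Continuous.continuousOn (by continuity)
      · intro x hx; exact pow_ne_zero 2 (ne_of_gt (Set.mem_Ioi.mp hx))
    · intro x hx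
      rw [interior_Ioi] at hx
      have hx0 : (0:ℝ) < x := hx
      have h1 : HasDerivAt (fun x : ℝ => Real.exp x - 1 - x) (Real.exp x - 1) x := by
        exact ((Real.hasDerivAt_exp x).sub_const 1).sub (hasDerivAt_id' x)
      have h2 : HasDerivAt (fun x : ℝ => x ^ 2) (2 * x) x := by
        simpa using hasDerivAt_pow 2 x
      exact ((h1.div h2 (pow_ne_zero 2 (ne_of_gt hx0))).differentiableAt).differentiableWithinAt
    · intro x hx
      rw [interior_Ioi] at hx
      have hx0 : (0:ℝ) < x := hx
      have h1 : HasDerivAt (fun x : ℝ => Real.exp x - 1 - x) (Real.exp x - 1) x := by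
        exact ((Real.hasDerivAt_exp x).sub_const 1).sub (hasDerivAt_id' x)
      have h2 : HasDerivAt (fun x : ℝ => x ^ 2) (2 * x) x := by
        simpa using hasDerivAt_pow 2 x
      rw [(show HasDerivAt G _ x from h1.div h2 (pow_ne_zero 2 (ne_of_gt hx0))).deriv]
      have hnum : 0 ≤ (Real.exp x - 1) * x ^ 2 - (Real.exp x - 1 - x) * (2 * x) := by
        have := aux_h1' hx0.le
        nlinarith
      positivity
  have := hmono (Set.mem_Ioi.mpr hs) (Set.mem_Ioi.mpr ht) hst
  rw [hG] at this
  rw [div_le_div_iff₀ (by positivity) (by positivity)] at this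
  linarith

end aux

set_option maxHeartbeats 2000000 in
theorem stmt_4
    {Ω : Type*} {m0 : MeasurableSpace Ω} {μ : Measure Ω} [IsProbabilityMeasure μ]
    (ℱ : Filtration ℕ m0) (X : ℕ → Ω → ℝ) (hadp : Adapted ℱ X)
    (x0 : ℝ) (hX0 : ∀ᵐ ω ∂μ, X 0 ω = x0)
    (k ε K : ℝ) (hk : 0 < k) (hε0 : 0 < ε) (hεk : ε ≤ k)
    (hbdd : ∀ n : ℕ, ∀ᵐ ω ∂μ, |X (n + 1) ω - X n ω| ≤ k)
    (hdrift : ∀ n : ℕ, ∀ᵐ ω ∂μ, K ≤ X n ω →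
      (μ[(fun ω' => X (n + 1) ω' - X n ω') | ℱ n]) ω ≤ -ε)
    (lam : ℝ) (hlam : 0 < lam)
    (c η ρ D : ℝ)
    (hc : c = (Real.exp (lam * k) - 1 - lam * k) / lam ^ 2)
    (hη0 : 0 < η) (hηlt : η < min lam (ε / (2 * c)))
    (hρ : ρ = 1 - η * ε / 2)
    (hD : D = Real.exp (lam * k))
    (τ : ℕ → Ω → ℕ∞)
    (hτ : ∀ m ω, τ m ω = sInf ((fun n : ℕ => (n : ℕ∞)) '' {n : ℕ | X (m + n) ω ≤ K})) :
    ∀ m n : ℕ, ∀ᵐ ω ∂μ,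
      (μ[Set.indicator {ω' | (n : ℕ∞) < τ m ω'} (fun _ => (1 : ℝ)) | ℱ m]) ω ≤
        Real.exp (η * (X m ω - K)) * ρ ^ n := by
  -- constants
  have hηlam : η < lam := lt_of_lt_of_le hηlt (min_le_left _ _)
  have hcnum : 0 < Real.exp (lam * k) - 1 - lam * k := by
    have := Real.add_one_lt_exp (ne_of_gt (mul_pos hlam hk)); linarith
  have hcpos : 0 < c := by rw [hc]; positivity
  have hηc : η * (2 * c) < ε := by
    have h := lt_of_lt_of_le hηlt (min_le_right _ _)
    rwa [lt_div_iff₀ (by positivity)] at h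
  have hcge : k ^ 2 / 4 ≤ c := by
    have h1 := Real.add_one_le_exp (lam * k / 2)
    have h2 : Real.exp (lam * k) = Real.exp (lam * k / 2) * Real.exp (lam * k / 2) := by
      rw [← Real.exp_add]; ring_nf
    rw [hc, le_div_iff₀ (by positivity)]
    nlinarith [mul_pos hlam hk]
  have hρ0 : 0 < ρ := by
    rw [hρ]
    nlinarith [mul_pos hη0 hε0, mul_lt_mul_of_pos_right hηc hε0,
      mul_le_mul hεk hεk hε0.le hk.le]
  set fA : ℝ := Real.exp (η * k) - 1 - η * k with hfA_def
  have hfAc : fA ≤ η ^ 2 * c := by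
    have hB := expB' (s := η * k) (t := lam * k) (mul_pos hη0 hk)
      (by nlinarith)
    rw [hc, mul_div_assoc', le_div_iff₀ (by positivity)]
    nlinarith [hB, pow_pos hk 2]
  have hkey_const : 1 + fA - η * ε ≤ ρ := by
    rw [hρ]
    have h2 : η ^ 2 * c ≤ η * ε / 2 := by nlinarith
    linarith
  intro m
  -- the events and the supermartingale-type process
  set A : ℕ → Set Ω := fun n => {ω | ∀ j, j ≤ n → K < X (m + j) ω} with hA_def
  set W : ℕ → Ω → ℝ :=
    fun n => (A n).indicator (fun ω => Real.exp (η * (X (m + n) ω - K))) with hW_def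
  have hXm : ∀ {i j : ℕ}, i ≤ j → StronglyMeasurable[ℱ (m + j)] (X (m + i)) :=
    fun {i j} h => (hadp (m + i)).stronglyMeasurable.mono (ℱ.mono (by omega))
  have hA : ∀ n, MeasurableSet[ℱ (m + n)] (A n) := by
    intro n
    have : A n = ⋂ (j : ℕ) (_ : j ≤ n), {ω | K < X (m + j) ω} := by
      ext ω; simp [hA_def]
    rw [this]
    refine MeasurableSet.iInter fun j => MeasurableSet.iInter fun hj => ?_
    exact measurableSet_lt measurable_const (hXm hj).measurable
  have hWmeas : ∀ n, StronglyMeasurable[ℱ (m + n)] (W n) := by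
    intro n
    refine StronglyMeasurable.indicator ?_ (hA n)
    exact (Real.continuous_exp.comp_stronglyMeasurable
      (((hadp (m + n)).stronglyMeasurable.sub stronglyMeasurable_const).const_mul η))
  -- a.e. boundedness of X
  have hXb : ∀ n, ∀ᵐ ω ∂μ, |X n ω| ≤ |x0| + n * k := by
    intro n
    induction n with
    | zero => filter_upwards [hX0] with ω h; simp [h]
    | succ n ih =>
      filter_upwards [ih, hbdd n] with ω h1 h2
      have : |X (n + 1) ω| ≤ |X n ω| + |X (n + 1) ω - X n ω| := by
        have := abs_add_le (X n ω) (X (n + 1) ω - X n ω)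
        simpa using this
      push_cast
      linarith
  have hWint : ∀ n, Integrable (W n) μ := by
    intro n
    refine Integrable.mono' (integrable_const (Real.exp (η * (|x0| + (m + n) * k + |K|))))
      ((hWmeas n).mono (ℱ.le _)).aestronglyMeasurable ?_
    filter_upwards [hXb (m + n)] with ω h
    push_cast at h
    simp only [hW_def]
    by_cases hmem : ω ∈ A n
    · rw [Set.indicator_of_mem hmem, Real.norm_eq_abs,
        abs_of_pos (Real.exp_pos _), Real.exp_le_exp]
      have : X (m + n) ω - K ≤ |x0| + (m + n) * k + |K| := by
        have h1 : X (m + n) ω ≤ |X (m + n) ω| := le_abs_self _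
        have h2 : -K ≤ |K| := neg_le_abs K
        linarith
      exact mul_le_mul_of_nonneg_left this hη0.le
    · rw [Set.indicator_of_notMem hmem]
      simp [Real.exp_pos, (Real.exp_pos _).le]
  have hΔint : ∀ n : ℕ, Integrable (fun ω => X (n + 1) ω - X n ω) μ := by
    intro n
    refine Integrable.mono' (integrable_const k)
      ((((hadp (n + 1)).stronglyMeasurable.mono (ℱ.le _) : StronglyMeasurable (X (n + 1)))).sub
        (((hadp n).stronglyMeasurable.mono (ℱ.le _) : StronglyMeasurable (X n)))).aestronglyMeasurable ?_
    filter_upwards [hbdd n] with ω h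
    simpa using h
  have hGint : ∀ n : ℕ, Integrable (fun ω => Real.exp (η * (X (n + 1) ω - X n ω))) μ := by
    intro n
    refine Integrable.mono' (integrable_const (Real.exp (η * k)))
      (Real.continuous_exp.comp_aestronglyMeasurable
        (((((hadp (n + 1)).stronglyMeasurable.mono (ℱ.le _) : StronglyMeasurable (X (n + 1)))).sub
          (((hadp n).stronglyMeasurable.mono (ℱ.le _) : StronglyMeasurable (X n)))).aestronglyMeasurable.const_smul η)) ?_
    filter_upwards [hbdd n] with ω h
    rw [Real.norm_eq_abs, abs_of_pos (Real.exp_pos _), Real.exp_le_exp]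
    have : X (n + 1) ω - X n ω ≤ k := (abs_le.mp h).2
    nlinarith
  have hWGint : ∀ n, Integrable
      (W n * fun ω => Real.exp (η * (X (m + n + 1) ω - X (m + n) ω))) μ := by
    intro n
    refine Integrable.mono'
      (integrable_const (Real.exp (η * (|x0| + (m + n) * k + |K|)) * Real.exp (η * k)))
      (((hWmeas n).mono (ℱ.le _)).aestronglyMeasurable.mul
        (Real.continuous_exp.comp_aestronglyMeasurable
          (((((hadp (m + n + 1)).stronglyMeasurable.mono (ℱ.le _) : StronglyMeasurable (X (m + n + 1)))).sub
            (((hadp (m + n)).stronglyMeasurable.mono (ℱ.le _) : StronglyMeasurable (X (m + n))))).aestronglyMeasurable.const_smul η))) ?_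
    filter_upwards [hXb (m + n), hbdd (m + n)] with ω h1 h2
    push_cast at h1
    rw [Pi.mul_apply, norm_mul]
    have hb1 : ‖W n ω‖ ≤ Real.exp (η * (|x0| + (m + n) * k + |K|)) := by
      simp only [hW_def]
      by_cases hmem : ω ∈ A n
      · rw [Set.indicator_of_mem hmem, Real.norm_eq_abs,
          abs_of_pos (Real.exp_pos _), Real.exp_le_exp]
        have hx1 : X (m + n) ω ≤ |X (m + n) ω| := le_abs_self _
        have hx2 : -K ≤ |K| := neg_le_abs K
        exact mul_le_mul_of_nonneg_left (by linarith) hη0.le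
      · rw [Set.indicator_of_notMem hmem]; simp [(Real.exp_pos _).le]
    have hb2 : ‖Real.exp (η * (X (m + n + 1) ω - X (m + n) ω))‖ ≤ Real.exp (η * k) := by
      rw [Real.norm_eq_abs, abs_of_pos (Real.exp_pos _), Real.exp_le_exp]
      have : X (m + n + 1) ω - X (m + n) ω ≤ k := (abs_le.mp h2).2
      nlinarith
    exact mul_le_mul hb1 hb2 (norm_nonneg _) (Real.exp_pos _).le
  -- conditional bound on the mgf increment
  have hGc : ∀ n, ∀ᵐ ω ∂μ, K ≤ X (m + n) ω →
      (μ[(fun ω' => Real.exp (η * (X (m + n + 1) ω' - X (m + n) ω'))) | ℱ (m + n)]) ω ≤ ρ := by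
    intro n
    have hptw : (fun ω' => Real.exp (η * (X (m + n + 1) ω' - X (m + n) ω'))) ≤ᵐ[μ]
        fun ω' => (1 + fA) + η * (X (m + n + 1) ω' - X (m + n) ω') := by
      filter_upwards [hbdd (m + n)] with ω h
      have habs : |η * (X (m + n + 1) ω - X (m + n) ω)| ≤ η * k := by
        rw [abs_mul, abs_of_pos hη0]
        exact mul_le_mul_of_nonneg_left h hη0.le
      have := expA' habs
      rw [hfA_def]
      linarith
    have hintR : Integrable (fun ω' => (1 + fA) + η * (X (m + n + 1) ω' - X (m + n) ω')) μ :=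
      (integrable_const (1 + fA)).add ((hΔint (m + n)).const_mul η)
    have h1 := condExp_mono (m := ℱ (m + n)) (hGint (m + n)) hintR hptw
    have h2 : μ[(fun ω' => (1 + fA) + η * (X (m + n + 1) ω' - X (m + n) ω')) | ℱ (m + n)]
        =ᵐ[μ] fun ω => (1 + fA) +
          η * (μ[(fun ω' => X (m + n + 1) ω' - X (m + n) ω') | ℱ (m + n)]) ω := by
      have e1 : (fun ω' => (1 + fA) + η * (X (m + n + 1) ω' - X (m + n) ω')) =
          (fun _ => (1 + fA)) + (η • fun ω' => X (m + n + 1) ω' - X (m + n) ω') := by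
        funext ω; simp [smul_eq_mul]
      rw [e1]
      refine (condExp_add (integrable_const _) ((hΔint (m + n)).smul η) (ℱ (m + n))).trans ?_
      have e2 := condExp_smul (m := ℱ (m + n)) (μ := μ) η
        (fun ω' => X (m + n + 1) ω' - X (m + n) ω')
      filter_upwards [e2] with ω hω
      rw [Pi.add_apply, hω]
      simp [condExp_const (ℱ.le (m + n)), smul_eq_mul]
    filter_upwards [h1, h2, hdrift (m + n)] with ω hω1 hω2 hω3 hK
    have := hω3 hK
    have hle : (μ[(fun ω' => Real.exp (η * (X (m + n + 1) ω' - X (m + n) ω'))) | ℱ (m + n)]) ω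
        ≤ (1 + fA) + η * (μ[(fun ω' => X (m + n + 1) ω' - X (m + n) ω') | ℱ (m + n)]) ω := by
      rw [← hω2]; exact hω1
    have : η * (μ[(fun ω' => X (m + n + 1) ω' - X (m + n) ω') | ℱ (m + n)]) ω ≤ η * (-ε) :=
      mul_le_mul_of_nonneg_left this hη0.le
    calc (μ[(fun ω' => Real.exp (η * (X (m + n + 1) ω' - X (m + n) ω'))) | ℱ (m + n)]) ω
        ≤ (1 + fA) + η * (-ε) := by linarith
      _ ≤ ρ := by linarith [hkey_const]
  -- one-step contraction
  have hstep : ∀ n, μ[W (n + 1) | ℱ (m + n)] ≤ᵐ[μ] fun ω => ρ * W n ω := by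
    intro n
    have hadd : m + (n + 1) = m + n + 1 := rfl
    have hWle : ∀ ω, W (n + 1) ω ≤
        (W n * fun ω' => Real.exp (η * (X (m + n + 1) ω' - X (m + n) ω'))) ω := by
      intro ω
      simp only [hW_def, Pi.mul_apply]
      by_cases h : ω ∈ A (n + 1)
      · have hsub : ω ∈ A n := by
          simp only [hA_def, Set.mem_setOf_eq] at h ⊢; intro j hj; exact h j (by omega)
        rw [Set.indicator_of_mem h, Set.indicator_of_mem hsub, ← Real.exp_add]
        rw [hadd]
        apply le_of_eq
        congr 1
        ring
      · rw [Set.indicator_of_notMem h]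
        exact mul_nonneg (Set.indicator_nonneg (fun _ _ => (Real.exp_pos _).le) ω)
          (Real.exp_pos _).le
    have t1 : μ[W (n + 1) | ℱ (m + n)] ≤ᵐ[μ]
        μ[W n * fun ω' => Real.exp (η * (X (m + n + 1) ω' - X (m + n) ω')) | ℱ (m + n)] :=
      condExp_mono (hWint (n + 1)) (hWGint n) (ae_of_all _ hWle)
    have t2 : μ[W n * fun ω' => Real.exp (η * (X (m + n + 1) ω' - X (m + n) ω')) | ℱ (m + n)]
        =ᵐ[μ] W n * μ[(fun ω' => Real.exp (η * (X (m + n + 1) ω' - X (m + n) ω'))) | ℱ (m + n)] :=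
      condExp_mul_of_stronglyMeasurable_left (hWmeas n) (hWGint n)
        (hGint (m + n))
    filter_upwards [t1, t2, hGc n] with ω h1 h2 h3
    rw [Pi.mul_apply] at h2
    by_cases hmem : ω ∈ A n
    · have hKX : K ≤ X (m + n) ω := by
        simp only [hA_def, Set.mem_setOf_eq] at hmem
        exact (hmem n le_rfl).le
      have hWnn : 0 ≤ W n ω := by
        simp only [hW_def]
        exact Set.indicator_nonneg (fun _ _ => (Real.exp_pos _).le) ω
      calc (μ[W (n + 1) | ℱ (m + n)]) ω
          ≤ W n ω * (μ[(fun ω' => Real.exp (η * (X (m + n + 1) ω' - X (m + n) ω')))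
              | ℱ (m + n)]) ω := by rw [← h2]; exact h1
        _ ≤ W n ω * ρ := mul_le_mul_of_nonneg_left (h3 hKX) hWnn
        _ = ρ * W n ω := mul_comm _ _
    · have hW0 : W n ω = 0 := by simp only [hW_def]; exact Set.indicator_of_notMem hmem _
      calc (μ[W (n + 1) | ℱ (m + n)]) ω
          ≤ W n ω * _ := by rw [← h2]; exact h1
        _ = ρ * W n ω := by rw [hW0]; ring
  -- iterate
  have key : ∀ n, μ[W n | ℱ m] ≤ᵐ[μ]
      fun ω => Real.exp (η * (X m ω - K)) * ρ ^ n := by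
    intro n
    induction n with
    | zero =>
      have hsm : StronglyMeasurable[ℱ m] (W 0) := by
        have := hWmeas 0; rwa [Nat.add_zero] at this
      have h0 : μ[W 0 | ℱ m] = W 0 :=
        condExp_of_stronglyMeasurable (ℱ.le m) hsm (hWint 0)
      rw [h0]
      refine ae_of_all _ fun ω => ?_
      simp only [pow_zero, mul_one]; simp only [hW_def]
      by_cases hmem : ω ∈ A 0
      · rw [Set.indicator_of_mem hmem, Nat.add_zero]
      · rw [Set.indicator_of_notMem hmem]
        exact (Real.exp_pos _).le
    | succ n ih =>
      have t1 : μ[W (n + 1) | ℱ m] =ᵐ[μ] μ[μ[W (n + 1) | ℱ (m + n)] | ℱ m] :=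
        (condExp_condExp_of_le (ℱ.mono (Nat.le_add_right m n)) (ℱ.le (m + n))).symm
      have t2 : μ[μ[W (n + 1) | ℱ (m + n)] | ℱ m] ≤ᵐ[μ] μ[(fun ω => ρ * W n ω) | ℱ m] :=
        condExp_mono integrable_condExp ((hWint n).const_mul ρ) (hstep n)
      have t3 : μ[(fun ω => ρ * W n ω) | ℱ m] =ᵐ[μ] fun ω => ρ * (μ[W n | ℱ m]) ω := by
        have e1 : (fun ω => ρ * W n ω) = ρ • W n := by funext ω; simp [smul_eq_mul]
        rw [e1]
        filter_upwards [condExp_smul (m := ℱ m) (μ := μ) ρ (W n)] with ω hω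
        rw [hω]; simp [smul_eq_mul]
      filter_upwards [t1, t2, t3, ih] with ω h1 h2 h3 h4
      rw [h1]
      calc (μ[μ[W (n + 1) | ℱ (m + n)] | ℱ m]) ω
          ≤ (μ[(fun ω => ρ * W n ω) | ℱ m]) ω := h2
        _ = ρ * (μ[W n | ℱ m]) ω := h3
        _ ≤ ρ * (Real.exp (η * (X m ω - K)) * ρ ^ n) :=
            mul_le_mul_of_nonneg_left h4 hρ0.le
        _ = Real.exp (η * (X m ω - K)) * ρ ^ (n + 1) := by ring
  -- conclude
  intro n
  have hseteq : {ω' | (n : ℕ∞) < τ m ω'} = A n := by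
    ext ω
    simp only [Set.mem_setOf_eq, hτ m ω, hA_def]
    constructor
    · intro h j hj
      by_contra hle
      push_neg at hle
      have h1 : sInf ((fun n : ℕ => (n : ℕ∞)) '' {n : ℕ | X (m + n) ω ≤ K}) ≤ (j : ℕ∞) :=
        sInf_le ⟨j, hle, rfl⟩
      have h2 : (n : ℕ∞) < (j : ℕ∞) := lt_of_lt_of_le h h1
      exact absurd (Nat.cast_le.mpr hj) (not_le.mpr h2)
    · intro h
      have hle : ((n + 1 : ℕ) : ℕ∞) ≤
          sInf ((fun n : ℕ => (n : ℕ∞)) '' {n : ℕ | X (m + n) ω ≤ K}) := by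
        refine le_sInf ?_
        rintro b ⟨j, hjS, rfl⟩
        have hjn : ¬ j ≤ n := fun hj => absurd hjS (not_le.mpr (h j hj))
        exact Nat.cast_le.mpr (by omega)
      calc (n : ℕ∞) < ((n + 1 : ℕ) : ℕ∞) := by exact_mod_cast Nat.lt_succ_self n
        _ ≤ _ := hle
  have hIle : ∀ ω, Set.indicator {ω' | (n : ℕ∞) < τ m ω'} (fun _ => (1 : ℝ)) ω ≤ W n ω := by
    intro ω
    rw [hseteq]; simp only [hW_def]
    by_cases hmem : ω ∈ A n
    · rw [Set.indicator_of_mem hmem, Set.indicator_of_mem hmem]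
      apply Real.one_le_exp
      have : K < X (m + n) ω := by simp only [hA_def, Set.mem_setOf_eq] at hmem; exact hmem n le_rfl
      nlinarith
    · rw [Set.indicator_of_notMem hmem, Set.indicator_of_notMem hmem]
  have hIint : Integrable (Set.indicator {ω' | (n : ℕ∞) < τ m ω'} (fun _ => (1 : ℝ))) μ := by
    rw [hseteq]
    exact (integrable_const (1 : ℝ)).indicator ((ℱ.le (m + n)) _ (hA n))
  have hfin := condExp_mono (m := ℱ m) hIint (hWint n) (ae_of_all _ hIle)
  filter_upwards [hfin, key n] with ω h1 h2
  exact le_trans h1 h2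
end

section
/- Under the stated drift hypotheses, for every m ∈ ℕ the return time τ_{K,m} is almost surely finite, and it has some exponential moments: for every s with 1 < s < ρ^{-1}, E[s^{τ_{K,m}}] ≤ e^{η(x_0 + mk − K)} · (s − 1)/(1 − ρ s) + 1 < ∞. -/
open MeasureTheory Filter Real Set

lemma exp_tsum_tail (t : ℝ) :
    Real.exp t = 1 + t + ∑' n : ℕ, t ^ (n + 2) / Nat.factorial (n + 2) := by
  have hs := NormedSpace.expSeries_div_summable t
  have h0 : Real.exp t = ∑' n : ℕ, t ^ n / Nat.factorial n := by
    rw [Real.exp_eq_exp_ℝ, NormedSpace.exp_eq_tsum_div]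
  rw [h0, Summable.tsum_eq_zero_add hs, Summable.tsum_eq_zero_add (by simpa [Function.comp_def] using (hs.comp_injective (add_left_injective 1)) : Summable fun n => t ^ (n+1) / Nat.factorial (n+1))]
  simp [Nat.factorial]
  ring

lemma tail_summable (t : ℝ) : Summable (fun n : ℕ => t ^ (n + 2) / Nat.factorial (n + 2)) := by
  simpa [Function.comp_def] using ((NormedSpace.expSeries_div_summable t).comp_injective
    (add_left_injective 2))

lemma key_exp_ineq {x k lam η : ℝ} (hx : |x| ≤ k) (hη : 0 < η) (hηlam : η ≤ lam) :
    Real.exp (η * x) ≤ 1 + η * x +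
      η ^ 2 * ((Real.exp (lam * k) - 1 - lam * k) / lam ^ 2) := by
  have hlam : 0 < lam := lt_of_lt_of_le hη hηlam
  have hk0 : 0 ≤ k := le_trans (abs_nonneg x) hx
  have h1 : Real.exp (η * x) - 1 - η * x
      = ∑' n : ℕ, (η * x) ^ (n + 2) / Nat.factorial (n + 2) := by
    rw [exp_tsum_tail (η * x)]; ring
  have h2 : Real.exp (lam * k) - 1 - lam * k
      = ∑' n : ℕ, (lam * k) ^ (n + 2) / Nat.factorial (n + 2) := by
    rw [exp_tsum_tail (lam * k)]; ring
  have hterm : ∀ n : ℕ, (η * x) ^ (n + 2) / Nat.factorial (n + 2)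
      ≤ η ^ 2 / lam ^ 2 * ((lam * k) ^ (n + 2) / Nat.factorial (n + 2)) := by
    intro n
    rw [← mul_div_assoc]
    refine (div_le_div_iff_of_pos_right (by positivity)).mpr ?_
    have h3 : (η * x) ^ (n + 2) ≤ (η * |x|) ^ (n + 2) := by
      calc (η * x) ^ (n + 2) ≤ |(η * x) ^ (n + 2)| := le_abs_self _
        _ = (η * |x|) ^ (n + 2) := by
          rw [abs_pow, abs_mul, abs_of_pos hη]
    refine h3.trans ?_
    have h4 : (η * |x|) ^ (n + 2) ≤ (η * k) ^ (n + 2) := by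
      apply pow_le_pow_left₀ (by positivity)
      exact mul_le_mul_of_nonneg_left hx hη.le
    refine h4.trans ?_
    have hpow : η ^ (n + 2) ≤ η ^ 2 * lam ^ n := by
      calc η ^ (n + 2) = η ^ 2 * η ^ n := by ring
        _ ≤ η ^ 2 * lam ^ n := by
            exact mul_le_mul_of_nonneg_left (pow_le_pow_left₀ hη.le hηlam n) (by positivity)
    calc (η * k) ^ (n + 2) = η ^ (n + 2) * k ^ (n + 2) := by rw [mul_pow]
      _ ≤ η ^ 2 * lam ^ n * k ^ (n + 2) :=
          mul_le_mul_of_nonneg_right hpow (by positivity)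
      _ = η ^ 2 / lam ^ 2 * (lam * k) ^ (n + 2) := by
          rw [mul_pow]; field_simp; ring
  have hsum := Summable.tsum_le_tsum hterm (tail_summable (η * x))
    (((tail_summable (lam * k)).mul_left (η ^ 2 / lam ^ 2)))
  rw [tsum_mul_left] at hsum
  have hfin : Real.exp (η * x) - 1 - η * x
      ≤ η ^ 2 / lam ^ 2 * (Real.exp (lam*k) - 1 - lam*k) := by
    rw [h1, h2]; exact hsum
  have heq : η ^ 2 / lam ^ 2 * (Real.exp (lam*k) - 1 - lam*k)
      = η ^ 2 * ((Real.exp (lam*k) - 1 - lam*k) / lam ^ 2) := by ring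
  linarith

lemma quad_le_exp {t : ℝ} (ht : 0 ≤ t) : 1 + t + t ^ 2 / 2 ≤ Real.exp t := by
  have h1 : Real.exp t - 1 - t = ∑' n : ℕ, t ^ (n + 2) / Nat.factorial (n + 2) := by
    rw [exp_tsum_tail t]; ring
  have h2 : t ^ 2 / 2 ≤ ∑' n : ℕ, t ^ (n + 2) / Nat.factorial (n + 2) := by
    have := Summable.le_tsum (tail_summable t) 0 (fun n _ => by positivity)
    simpa [Nat.factorial] using this
  linarith [h1, h2]

set_option maxHeartbeats 1000000 in
theorem stmt_5
    {Ω : Type*} {m0 : MeasurableSpace Ω} {μ : Measure Ω} [IsProbabilityMeasure μ]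
    (ℱ : Filtration ℕ m0) (X : ℕ → Ω → ℝ) (hadp : Adapted ℱ X)
    (x0 : ℝ) (hX0 : ∀ᵐ ω ∂μ, X 0 ω = x0)
    (k ε K : ℝ) (hk : 0 < k) (hε0 : 0 < ε) (hεk : ε ≤ k)
    (hbdd : ∀ n : ℕ, ∀ᵐ ω ∂μ, |X (n + 1) ω - X n ω| ≤ k)
    (hdrift : ∀ n : ℕ, ∀ᵐ ω ∂μ, K ≤ X n ω →
      (μ[(fun ω' => X (n + 1) ω' - X n ω') | ℱ n]) ω ≤ -ε)
    (lam : ℝ) (hlam : 0 < lam)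
    (c η ρ D : ℝ)
    (hc : c = (Real.exp (lam * k) - 1 - lam * k) / lam ^ 2)
    (hη0 : 0 < η) (hηlt : η < min lam (ε / (2 * c)))
    (hρ : ρ = 1 - η * ε / 2)
    (hD : D = Real.exp (lam * k))
    (τ : ℕ → Ω → ℕ∞)
    (hτ : ∀ m ω, τ m ω = sInf ((fun n : ℕ => (n : ℕ∞)) '' {n : ℕ | X (m + n) ω ≤ K})) :
    ∀ m : ℕ,
      (∀ᵐ ω ∂μ, τ m ω ≠ ⊤) ∧
      (∀ s : ℝ, 1 < s → s < ρ⁻¹ →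
        Integrable (fun ω => s ^ (τ m ω).toNat) μ ∧
        ∫ ω, s ^ (τ m ω).toNat ∂μ ≤
          Real.exp (η * (x0 + m * k - K)) * ((s - 1) / (1 - ρ * s)) + 1) := by
  -- constants
  have hηlam : η ≤ lam := le_of_lt (lt_of_lt_of_le hηlt (min_le_left _ _))
  have hck : k ^ 2 / 2 ≤ c := by
    have h := quad_le_exp (t := lam * k) (by positivity)
    rw [hc, le_div_iff₀ (by positivity)]
    nlinarith
  have hc_pos : 0 < c := lt_of_lt_of_le (by positivity) hck
  have hηc : η * c < ε / 2 := by
    have h2 : η < ε / (2 * c) := lt_of_lt_of_le hηlt (min_le_right _ _)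
    rw [lt_div_iff₀ (by positivity)] at h2; nlinarith
  have hηε1 : η * ε < 1 := by
    have h2 : η < ε / (2 * c) := lt_of_lt_of_le hηlt (min_le_right _ _)
    rw [lt_div_iff₀ (by positivity)] at h2
    nlinarith
  have hρ0 : 0 < ρ := by rw [hρ]; linarith
  have hρ1 : ρ < 1 := by rw [hρ]; nlinarith
  have hXsm : ∀ n, Measurable (X n) := fun n => (hadp n).mono (ℱ.le n) le_rfl
  have hXub : ∀ n : ℕ, ∀ᵐ ω ∂μ, X n ω ≤ x0 + n * k := by
    intro n
    induction n with
    | zero => filter_upwards [hX0] with ω h; simp [h]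
    | succ n ih =>
      filter_upwards [ih, hbdd n] with ω h1 h2
      have h3 := (abs_le.mp h2).2
      push_cast
      nlinarith
  have hbdd_int : ∀ (g : Ω → ℝ) (B : ℝ), AEStronglyMeasurable g μ →
      (∀ᵐ ω ∂μ, |g ω| ≤ B) → Integrable g μ := by
    intro g B hm hb
    refine Integrable.mono' (integrable_const B) hm ?_
    filter_upwards [hb] with ω h
    simpa [Real.norm_eq_abs] using h
  intro m
  set C : ℝ := Real.exp (η * (x0 + m * k - K)) with hCdef
  have hC0 : 0 < C := Real.exp_pos _
  set A : ℕ → Set Ω := fun n => {ω | ∀ i ≤ n, K < X (m + i) ω} with hAdef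
  have hAanti : ∀ n, A (n+1) ⊆ A n := fun n ω hω i hi => hω i (hi.trans (Nat.le_succ n))
  have hAmeasF : ∀ n, MeasurableSet[ℱ (m+n)] (A n) := by
    intro n
    have hAeq : A n = ⋂ i ∈ Finset.range (n+1), {ω | K < X (m+i) ω} := by
      ext ω
      simp [hAdef, Nat.lt_succ_iff]
    rw [hAeq]
    refine MeasurableSet.biInter (Set.to_countable _) fun i hi => ?_
    have hi' : i ≤ n := Nat.lt_succ_iff.mp (Finset.mem_range.mp hi)
    exact measurableSet_lt measurable_const
      ((hadp (m+i)).mono (ℱ.mono (by omega)) le_rfl)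
  have hAmeas : ∀ n, MeasurableSet (A n) := fun n => ℱ.le _ _ (hAmeasF n)
  set f : ℕ → Ω → ℝ :=
    fun n => (A n).indicator (fun ω => Real.exp (η * (X (m+n) ω - K))) with hfdef
  have hf_nonneg : ∀ n ω, 0 ≤ f n ω :=
    fun n ω => Set.indicator_nonneg (fun ω _ => (Real.exp_pos _).le) ω
  have hf_measF : ∀ n, Measurable[ℱ (m+n)] (f n) := by
    intro n
    exact ((measurable_const.mul ((hadp (m+n)).sub measurable_const)).exp).indicator
      (hAmeasF n)
  have hf_meas : ∀ n, Measurable (f n) := fun n => (hf_measF n).mono (ℱ.le _) le_rfl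
  have hf_int : ∀ n, Integrable (f n) μ := by
    intro n
    refine hbdd_int _ (Real.exp (η * (x0 + (m+n) * k - K))) (hf_meas n).aestronglyMeasurable ?_
    filter_upwards [hXub (m+n)] with ω hω
    push_cast at hω
    rw [abs_of_nonneg (hf_nonneg n ω)]
    by_cases hωA : ω ∈ A n
    · rw [hfdef]
      simp only [Set.indicator_of_mem hωA]
      exact Real.exp_le_exp.mpr (mul_le_mul_of_nonneg_left (by linarith) hη0.le)
    · rw [hfdef]; simp only [Set.indicator_of_notMem hωA]
      positivity
  -- main one-step bound
  have hJstep : ∀ n, ∫ ω, f (n+1) ω ∂μ ≤ ρ * ∫ ω, f n ω ∂μ := by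
    intro n
    set N := m + n with hNdef
    set Δ : Ω → ℝ := fun ω' => X (N + 1) ω' - X N ω' with hΔdef
    set h : Ω → ℝ := fun ω => Real.exp (η * Δ ω) with hhdef
    have hΔmeas : Measurable Δ := (hXsm (N+1)).sub (hXsm N)
    have hΔint : Integrable Δ μ := hbdd_int _ k hΔmeas.aestronglyMeasurable (hbdd N)
    have hhmeas : Measurable h := (measurable_const.mul hΔmeas).exp
    have hhint : Integrable h μ := by
      refine hbdd_int _ (Real.exp (η * k)) hhmeas.aestronglyMeasurable ?_
      filter_upwards [hbdd N] with ω hω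
      rw [abs_of_pos (Real.exp_pos _)]
      exact Real.exp_le_exp.mpr (mul_le_mul_of_nonneg_left (abs_le.mp hω).2 hη0.le)
    have hghint : Integrable (f n * h) μ := by
      refine hbdd_int _ (Real.exp (η * (x0 + (m+n) * k - K)) * Real.exp (η * k))
        ((hf_meas n).mul hhmeas).aestronglyMeasurable ?_
      filter_upwards [hXub (m+n), hbdd N] with ω h1 h2
      push_cast at h1
      rw [Pi.mul_apply, abs_mul, abs_of_nonneg (hf_nonneg n ω), abs_of_pos (Real.exp_pos _)]
      refine mul_le_mul ?_ ?_ (Real.exp_pos _).le (Real.exp_pos _).le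
      · by_cases hωA : ω ∈ A n
        · rw [hfdef]; simp only [Set.indicator_of_mem hωA]
          exact Real.exp_le_exp.mpr (mul_le_mul_of_nonneg_left (by linarith) hη0.le)
        · rw [hfdef]; simp only [Set.indicator_of_notMem hωA]; positivity
      · exact Real.exp_le_exp.mpr (mul_le_mul_of_nonneg_left (abs_le.mp h2).2 hη0.le)
    -- conditional expectation bound
    set u : Ω → ℝ := fun ω => 1 + η ^ 2 * c + η * Δ ω with hudef
    have huint : Integrable u μ := by
      have : u = (fun _ : Ω => 1 + η ^ 2 * c) + η • Δ := by
        funext ω; simp [hudef, smul_eq_mul]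
      rw [this]
      exact (integrable_const _).add (hΔint.smul η)
    have hucond : μ[u | ℱ N] =ᵐ[μ]
        fun ω => 1 + η ^ 2 * c + η * (μ[Δ | ℱ N]) ω := by
      have hsplit : u = (fun _ : Ω => 1 + η ^ 2 * c) + η • Δ := by
        funext ω; simp [hudef, smul_eq_mul]
      rw [hsplit]
      calc μ[(fun _ : Ω => 1 + η ^ 2 * c) + η • Δ | ℱ N]
          =ᵐ[μ] μ[(fun _ : Ω => 1 + η ^ 2 * c) | ℱ N] + μ[η • Δ | ℱ N] :=
            condExp_add (integrable_const _) (hΔint.smul η) (ℱ N)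
        _ =ᵐ[μ] fun ω => 1 + η ^ 2 * c + η * (μ[Δ | ℱ N]) ω := by
            filter_upwards [condExp_smul (μ := μ) (m := ℱ N) η Δ] with ω hω
            rw [Pi.add_apply, hω, condExp_const (ℱ.le N), Pi.smul_apply, smul_eq_mul]
    have hhu : h ≤ᵐ[μ] u := by
      filter_upwards [hbdd N] with ω hω
      have := key_exp_ineq (x := Δ ω) (k := k) (lam := lam) (η := η) hω hη0 hηlam
      rw [hhdef, hudef]
      simp only
      rw [hc]
      linarith [this]
    have hcond : ∀ᵐ ω ∂μ, ω ∈ A n → (μ[h | ℱ N]) ω ≤ ρ := by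
      filter_upwards [condExp_mono hhint huint hhu, hucond, hdrift N] with ω h1 h2 h3 hωA
      have hKX : K ≤ X N ω := le_of_lt (hωA n le_rfl)
      have h4 : (μ[Δ | ℱ N]) ω ≤ -ε := by
        rw [hΔdef]; exact h3 hKX
      have h5 : (μ[h | ℱ N]) ω ≤ 1 + η ^ 2 * c + η * (μ[Δ | ℱ N]) ω := by
        rw [← h2]; exact h1
      have h6 : η * (μ[Δ | ℱ N]) ω ≤ η * (-ε) := mul_le_mul_of_nonneg_left h4 hη0.le
      have h7 : η ^ 2 * c ≤ η * ε / 2 := by nlinarith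
      rw [hρ]; linarith
    -- pull-out property
    have hpull : μ[f n * h | ℱ N] =ᵐ[μ] f n * μ[h | ℱ N] :=
      condExp_mul_of_stronglyMeasurable_left ((hf_measF n).stronglyMeasurable) hghint hhint
    have hconint : Integrable (f n * μ[h | ℱ N]) μ :=
      (integrable_condExp (f := f n * h)).congr hpull
    have step1 : ∫ ω, f (n+1) ω ∂μ ≤ ∫ ω, (f n * h) ω ∂μ := by
      refine integral_mono (hf_int (n+1)) hghint ?_
      intro ω
      by_cases hωA : ω ∈ A (n+1)
      · have hωA' : ω ∈ A n := hAanti n hωA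
        rw [hfdef]
        simp only [Pi.mul_apply, Set.indicator_of_mem hωA, Set.indicator_of_mem hωA']
        rw [hhdef]
        simp only
        rw [← Real.exp_add]
        apply le_of_eq
        congr 1
        rw [hΔdef, hNdef]
        push_cast
        ring_nf
      · have : f (n+1) ω = 0 := Set.indicator_of_notMem hωA _
        rw [this]
        exact mul_nonneg (hf_nonneg n ω) (Real.exp_pos _).le
    have step2 : ∫ ω, (f n * h) ω ∂μ = ∫ ω, (f n * μ[h | ℱ N]) ω ∂μ := by
      calc ∫ ω, (f n * h) ω ∂μ = ∫ ω, (μ[f n * h | ℱ N]) ω ∂μ :=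
            (integral_condExp (ℱ.le N)).symm
        _ = ∫ ω, (f n * μ[h | ℱ N]) ω ∂μ := integral_congr_ae hpull
    have step3 : ∫ ω, (f n * μ[h | ℱ N]) ω ∂μ ≤ ∫ ω, ρ * f n ω ∂μ := by
      refine integral_mono_ae hconint ((hf_int n).const_mul ρ) ?_
      filter_upwards [hcond] with ω hω
      by_cases hωA : ω ∈ A n
      · have h1 := hω hωA
        calc f n ω * (μ[h | ℱ N]) ω ≤ f n ω * ρ :=
              mul_le_mul_of_nonneg_left h1 (hf_nonneg n ω)
          _ = ρ * f n ω := mul_comm _ _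
      · have hz : f n ω = 0 := Set.indicator_of_notMem hωA _
        simp [hz]
    have step4 : ∫ ω, ρ * f n ω ∂μ = ρ * ∫ ω, f n ω ∂μ := integral_const_mul ρ _
    linarith
  have hJ0 : ∫ ω, f 0 ω ∂μ ≤ C := by
    have hae : ∀ᵐ ω ∂μ, f 0 ω ≤ C := by
      filter_upwards [hXub m] with ω hω
      by_cases hωA : ω ∈ A 0
      · have hω' : X (m+0) ω ≤ x0 + (m:ℝ)*k := by simpa using hω
        rw [hfdef]
        simp only [Set.indicator_of_mem hωA]
        exact Real.exp_le_exp.mpr (mul_le_mul_of_nonneg_left (by linarith) hη0.le)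
      · rw [hfdef]; simp only [Set.indicator_of_notMem hωA]; positivity
    calc ∫ ω, f 0 ω ∂μ ≤ ∫ _ω, C ∂μ := integral_mono_ae (hf_int 0) (integrable_const C) hae
      _ = C := by simp
  have hJn : ∀ n, ∫ ω, f n ω ∂μ ≤ C * ρ ^ n := by
    intro n
    induction n with
    | zero => simpa using hJ0
    | succ n ih =>
      calc ∫ ω, f (n+1) ω ∂μ ≤ ρ * ∫ ω, f n ω ∂μ := hJstep n
        _ ≤ ρ * (C * ρ ^ n) := mul_le_mul_of_nonneg_left ih hρ0.le
        _ = C * ρ ^ (n+1) := by ring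
  have hμA : ∀ n, μ (A n) ≤ ENNReal.ofReal (C * ρ ^ n) := by
    intro n
    have h1 : (μ (A n)).toReal ≤ ∫ ω, f n ω ∂μ := by
      have h2 : (μ (A n)).toReal = ∫ ω, (A n).indicator (fun _ => (1:ℝ)) ω ∂μ := by
        rw [integral_indicator (hAmeas n)]
        simp; rfl
      rw [h2]
      refine integral_mono ((integrable_const (1:ℝ)).indicator (hAmeas n)) (hf_int n) ?_
      intro ω
      by_cases hωA : ω ∈ A n
      · rw [hfdef]
        simp only [Set.indicator_of_mem hωA]
        refine Real.one_le_exp ?_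
        have := hωA n le_rfl
        nlinarith
      · simp [Set.indicator_of_notMem hωA, hf_nonneg n ω]
    calc μ (A n) = ENNReal.ofReal ((μ (A n)).toReal) :=
          (ENNReal.ofReal_toReal (measure_ne_top μ _)).symm
      _ ≤ ENNReal.ofReal (C * ρ ^ n) := ENNReal.ofReal_le_ofReal (h1.trans (hJn n))
  -- τ and A
  have hτle : ∀ (ω : Ω) (n : ℕ), τ m ω ≤ n ↔ ∃ i ≤ n, X (m+i) ω ≤ K := by
    intro ω n
    constructor
    · intro hle
      by_contra hcon
      push_neg at hcon
      have h1 : ((n:ℕ∞) + 1) ≤ τ m ω := by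
        rw [hτ]
        apply le_sInf
        rintro b ⟨j, hj, rfl⟩
        have hjn : n < j := by
          by_contra h'
          push_neg at h'
          exact absurd hj (not_le.mpr (hcon j h'))
        show ((n:ℕ∞) + 1) ≤ ((j:ℕ):ℕ∞)
        have h5 : ((n+1:ℕ):ℕ∞) ≤ ((j:ℕ):ℕ∞) := Nat.cast_le.mpr (Nat.succ_le_of_lt hjn)
        simpa using h5
      have h2 : ((n:ℕ∞) + 1) ≤ (n:ℕ∞) := h1.trans hle
      have h3 : (n:ℕ∞) + 1 ≤ (n:ℕ∞) → False := by
        intro hx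
        have : ((n+1:ℕ) : ℕ∞) ≤ ((n:ℕ):ℕ∞) := by push_cast; exact hx
        have := (Nat.cast_le (α := ℕ∞)).mp this
        omega
      exact h3 h2
    · rintro ⟨i, hin, hXi⟩
      rw [hτ]
      refine le_trans (sInf_le ⟨i, hXi, rfl⟩) ?_
      show ((i:ℕ):ℕ∞) ≤ ((n:ℕ):ℕ∞)
      exact Nat.cast_le.mpr hin
  have hAiff : ∀ (n : ℕ) (ω : Ω), ω ∈ A n ↔ ¬ (τ m ω ≤ (n:ℕ∞)) := by
    intro n ω
    rw [hτle]
    constructor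
    · intro hω ⟨i, hin, hXi⟩
      exact absurd hXi (not_le.mpr (hω i hin))
    · intro hno i hin
      by_contra hcon
      exact hno ⟨i, hin, not_lt.mp hcon⟩
  have hτtop : ∀ ω, τ m ω = ⊤ → ∀ n, ω ∈ A n := by
    intro ω htop n
    rw [hAiff, htop]
    intro hle
    exact absurd hle (by simp)
  have haefin : ∀ᵐ ω ∂μ, τ m ω ≠ ⊤ := by
    rw [ae_iff]
    have hsub : ∀ n, {ω | ¬ τ m ω ≠ ⊤} ⊆ A n := by
      intro n ω hω
      exact hτtop ω (not_not.mp hω) n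
    have hb : ∀ n, μ {ω | ¬ τ m ω ≠ ⊤} ≤ ENNReal.ofReal (C * ρ ^ n) :=
      fun n => (measure_mono (hsub n)).trans (hμA n)
    have htend : Tendsto (fun n => ENNReal.ofReal (C * ρ ^ n)) atTop (nhds 0) := by
      have h1 : Tendsto (fun n : ℕ => C * ρ ^ n) atTop (nhds 0) := by
        simpa using (tendsto_pow_atTop_nhds_zero_of_lt_one hρ0.le hρ1).const_mul C
      have := ENNReal.tendsto_ofReal h1
      simpa using this
    exact le_antisymm (ge_of_tendsto' htend hb) (zero_le)
  refine ⟨haefin, fun s hs1 hs2 => ?_⟩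
  have hρs : ρ * s < 1 := by
    have := (mul_lt_mul_iff_right₀ hρ0).mpr hs2
    rwa [mul_inv_cancel₀ hρ0.ne'] at this
  have hρs0 : 0 < 1 - ρ * s := by linarith
  -- measurability of the return time power
  have hTmeas : Measurable (fun ω => (τ m ω).toNat) := by
    apply measurable_to_countable'
    intro j
    match j with
    | 0 =>
      have hset : (fun ω => (τ m ω).toNat) ⁻¹' {0} = (A 0)ᶜ ∪ ⋂ n, A n := by
        ext ω
        simp only [Set.mem_preimage, Set.mem_singleton_iff, Set.mem_union, Set.mem_compl_iff,
          Set.mem_iInter, ENat.toNat_eq_zero]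
        constructor
        · rintro (h0 | htop)
          · left
            rw [hAiff]
            simp [h0]
          · right
            exact hτtop ω htop
        · rintro (h0 | hall)
          · left
            rw [hAiff] at h0
            push_neg at h0
            exact le_antisymm (by exact_mod_cast h0) (zero_le)
          · right
            by_contra hne
            obtain ⟨t, ht⟩ := WithTop.ne_top_iff_exists.mp hne
            have := (hAiff t ω).mp (hall t)
            exact this (le_of_eq ht.symm)
      rw [hset]
      exact ((hAmeas 0).compl.union (MeasurableSet.iInter (fun n => hAmeas n)))
    | (j+1) =>
      have hset : (fun ω => (τ m ω).toNat) ⁻¹' {j+1} = A j ∩ (A (j+1))ᶜ := by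
        ext ω
        simp only [Set.mem_preimage, Set.mem_singleton_iff, Set.mem_inter_iff,
          Set.mem_compl_iff]
        constructor
        · intro hEq
          have hne : τ m ω ≠ ⊤ := by
            intro htop
            rw [htop] at hEq
            simp at hEq
          have hτeq : τ m ω = ((j+1 : ℕ) : ℕ∞) := by
            rw [← hEq, ENat.coe_toNat hne]
          constructor
          · rw [hAiff, hτeq]
            intro hle
            have := (Nat.cast_le (α := ℕ∞)).mp hle
            omega
          · rw [hAiff]
            intro hno
            exact hno (le_of_eq hτeq)
        · rintro ⟨h1, h2⟩
          rw [hAiff] at h1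
          rw [hAiff, not_not] at h2
          have hne : τ m ω ≠ ⊤ := by
            intro htop
            rw [htop, top_le_iff] at h2
            exact ENat.coe_ne_top (j+1) h2
          obtain ⟨t, ht⟩ := WithTop.ne_top_iff_exists.mp hne
          rw [← ht] at h1 h2
          have hle1 : t ≤ j + 1 := (Nat.cast_le (α := ℕ∞)).mp h2
          have hle2 : ¬ (t ≤ j) := fun hcon => h1 (Nat.cast_le.mpr hcon)
          have ht' : t = j + 1 := by omega
          rw [← ht, ht']
          exact ENat.toNat_coe (j + 1)
      rw [hset]
      exact (hAmeas j).inter (hAmeas (j+1)).compl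
  have hFmeas : Measurable (fun ω => s ^ (τ m ω).toNat) :=
    measurable_from_nat.comp hTmeas
  have hF_nonneg : ∀ ω, (0:ℝ) ≤ s ^ (τ m ω).toNat := fun ω => pow_nonneg (by linarith) _
  -- lintegral bound
  set G : Ω → ENNReal := fun ω => 1 + ENNReal.ofReal (s-1) *
    ∑' i : ℕ, (A i).indicator (fun _ => ENNReal.ofReal (s ^ i)) ω with hGdef
  have hFG : ∀ᵐ ω ∂μ, ENNReal.ofReal (s ^ (τ m ω).toNat) ≤ G ω := by
    filter_upwards [haefin] with ω hfin
    set t := (τ m ω).toNat with htdef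
    have hτt : τ m ω = (t : ℕ∞) := (ENat.coe_toNat hfin).symm
    have hgeom : s ^ t = 1 + (s-1) * ∑ i ∈ Finset.range t, s ^ i := by
      have := geom_sum_mul s t
      nlinarith [this]
    have hmem : ∀ i < t, ω ∈ A i := by
      intro i hit
      rw [hAiff, hτt]
      intro hle
      have := (Nat.cast_le (α := ℕ∞)).mp hle
      omega
    have hsum_eq : ∑ i ∈ Finset.range t, ENNReal.ofReal (s ^ i)
        = ∑ i ∈ Finset.range t, (A i).indicator (fun _ => ENNReal.ofReal (s ^ i)) ω := by
      refine Finset.sum_congr rfl fun i hi => ?_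
      rw [Set.indicator_of_mem (hmem i (Finset.mem_range.mp hi))]
    calc ENNReal.ofReal (s ^ t)
        = 1 + ENNReal.ofReal (s-1) * ∑ i ∈ Finset.range t, ENNReal.ofReal (s ^ i) := by
          rw [hgeom, ENNReal.ofReal_add (by norm_num)
            (mul_nonneg (by linarith) (Finset.sum_nonneg fun i _ => by positivity)),
            ENNReal.ofReal_one, ENNReal.ofReal_mul (by linarith),
            ENNReal.ofReal_sum_of_nonneg (fun i _ => by positivity)]
      _ ≤ G ω := by
          rw [hGdef]
          refine add_le_add_right (mul_le_mul_right ?_ _) 1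
          rw [hsum_eq]
          exact ENNReal.sum_le_tsum _
  have hGlint : ∫⁻ ω, G ω ∂μ = 1 + ENNReal.ofReal (s-1) *
      ∑' i : ℕ, ENNReal.ofReal (s ^ i) * μ (A i) := by
    have hmeas_ind : ∀ i : ℕ, Measurable ((A i).indicator
        (fun _ : Ω => ENNReal.ofReal (s ^ i))) :=
      fun i => measurable_const.indicator (hAmeas i)
    have hmeas_tsum : Measurable (fun ω => ∑' i : ℕ,
        (A i).indicator (fun _ => ENNReal.ofReal (s ^ i)) ω) :=
      Measurable.ennreal_tsum hmeas_ind
    rw [hGdef]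
    rw [lintegral_add_left measurable_const, lintegral_const_mul _ hmeas_tsum,
      lintegral_tsum (fun i => (hmeas_ind i).aemeasurable)]
    congr 1
    · simp
    · congr 1
      refine tsum_congr fun i => ?_
      rw [lintegral_indicator (hAmeas i), setLIntegral_const]
  have hseries : ∑' i : ℕ, ENNReal.ofReal (s ^ i) * μ (A i)
      ≤ ENNReal.ofReal (C / (1 - ρ * s)) := by
    calc ∑' i : ℕ, ENNReal.ofReal (s ^ i) * μ (A i)
        ≤ ∑' i : ℕ, ENNReal.ofReal C * (ENNReal.ofReal (ρ * s)) ^ i := by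
          refine ENNReal.tsum_le_tsum fun i => ?_
          calc ENNReal.ofReal (s ^ i) * μ (A i)
              ≤ ENNReal.ofReal (s ^ i) * ENNReal.ofReal (C * ρ ^ i) :=
                mul_le_mul_right (hμA i) _
            _ = ENNReal.ofReal C * (ENNReal.ofReal (ρ * s)) ^ i := by
                rw [← ENNReal.ofReal_mul (by positivity), ← ENNReal.ofReal_pow (by positivity),
                  ← ENNReal.ofReal_mul hC0.le]
                congr 1
                ring
      _ = ENNReal.ofReal C * (1 - ENNReal.ofReal (ρ * s))⁻¹ := by
          rw [ENNReal.tsum_mul_left, ENNReal.tsum_geometric]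
      _ = ENNReal.ofReal (C / (1 - ρ * s)) := by
          rw [show (1:ENNReal) - ENNReal.ofReal (ρ * s) = ENNReal.ofReal (1 - ρ * s) by
            rw [ENNReal.ofReal_sub _ (by positivity), ENNReal.ofReal_one]]
          rw [← ENNReal.ofReal_inv_of_pos hρs0, ← ENNReal.ofReal_mul hC0.le]
          rw [div_eq_mul_inv]
  have hL : ∫⁻ ω, ENNReal.ofReal (s ^ (τ m ω).toNat) ∂μ
      ≤ ENNReal.ofReal (C * ((s - 1) / (1 - ρ * s)) + 1) := by
    calc ∫⁻ ω, ENNReal.ofReal (s ^ (τ m ω).toNat) ∂μ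
        ≤ ∫⁻ ω, G ω ∂μ := lintegral_mono_ae hFG
      _ = 1 + ENNReal.ofReal (s-1) * ∑' i : ℕ, ENNReal.ofReal (s ^ i) * μ (A i) := hGlint
      _ ≤ 1 + ENNReal.ofReal (s-1) * ENNReal.ofReal (C / (1 - ρ * s)) := by
          exact add_le_add_right (mul_le_mul_right hseries _) 1
      _ = ENNReal.ofReal (C * ((s - 1) / (1 - ρ * s)) + 1) := by
          rw [← ENNReal.ofReal_mul (by linarith : (0:ℝ) ≤ s - 1),
            show C * ((s - 1) / (1 - ρ * s)) + 1 = (s - 1) * (C / (1 - ρ * s)) + 1 by ring,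
            ENNReal.ofReal_add
              (mul_nonneg (by linarith) (div_nonneg hC0.le (by linarith)))
              (by norm_num),
            ENNReal.ofReal_one, add_comm]
  have hFint : Integrable (fun ω => s ^ (τ m ω).toNat) μ := by
    refine ⟨hFmeas.aestronglyMeasurable, ?_⟩
    rw [hasFiniteIntegral_iff_ofReal (Eventually.of_forall hF_nonneg)]
    exact lt_of_le_of_lt hL ENNReal.ofReal_lt_top
  refine ⟨hFint, ?_⟩
  rw [integral_eq_lintegral_of_nonneg_ae (Eventually.of_forall hF_nonneg)
    hFmeas.aestronglyMeasurable]
  calc (∫⁻ ω, ENNReal.ofReal (s ^ (τ m ω).toNat) ∂μ).toReal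
      ≤ (ENNReal.ofReal (C * ((s - 1) / (1 - ρ * s)) + 1)).toReal :=
        ENNReal.toReal_mono ENNReal.ofReal_ne_top hL
    _ = C * ((s - 1) / (1 - ρ * s)) + 1 := ENNReal.toReal_ofReal
          (by have h9 : 0 ≤ C * ((s - 1) / (1 - ρ * s)) :=
                mul_nonneg hC0.le (div_nonneg (by linarith) (by linarith))
              linarith)
end

section
/- Under the stated drift hypotheses, for every M ∈ ℝ one has liminf_{n→∞} P(X_n < M) ≥ p₀(M), where p₀(M) := 1 − (D e^{η(K − M)})/(1 − ρ); equivalently, limsup_{n→∞} P(X_n ≥ M) ≤ (D e^{η(K − M)})/(1 − ρ). -/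
open MeasureTheory Filter Nat Topology

private lemma summable_aux (x : ℝ) : Summable (fun n : ℕ => x ^ n / (n + 2)!) := by
  apply Summable.of_norm_bounded (Real.summable_pow_div_factorial |x|)
  intro n
  rw [norm_div, norm_pow, Real.norm_eq_abs, Real.norm_eq_abs]
  rw [abs_of_nonneg (by positivity : (0:ℝ) ≤ ((n+2)! : ℝ))]
  apply div_le_div_of_nonneg_left ?_ ?_ ?_
  · positivity
  · positivity
  · exact_mod_cast Nat.factorial_le (by omega)

private lemma exp_sub_eq (x : ℝ) :
    Real.exp x - 1 - x = x ^ 2 * ∑' n : ℕ, x ^ n / (n + 2)! := by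
  have hexp : Real.exp x = ∑' n : ℕ, x ^ n / n ! := by
    rw [Real.exp_eq_exp_ℝ, NormedSpace.exp_eq_tsum ℝ]
    exact tsum_congr fun n => by rw [smul_eq_mul, div_eq_inv_mul]
  have hsum : ∀ m : ℕ, Summable (fun n : ℕ => x ^ n / (n + m)!) := by
    intro m
    apply Summable.of_norm_bounded (Real.summable_pow_div_factorial |x|)
    intro n
    rw [norm_div, norm_pow, Real.norm_eq_abs, Real.norm_eq_abs]
    rw [abs_of_nonneg (by positivity : (0:ℝ) ≤ ((n+m)! : ℝ))]
    apply div_le_div_of_nonneg_left (by positivity) (by positivity)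
    exact_mod_cast Nat.factorial_le (by omega)
  have h0 : (fun n : ℕ => x ^ n / (n + 0)!) = fun n : ℕ => x ^ n / n ! := by
    funext n; simp
  have e1 : ∑' n : ℕ, x ^ n / n ! = 1 + ∑' n : ℕ, x ^ (n+1) / (n+1)! := by
    rw [Summable.tsum_eq_zero_add (by simpa [h0] using hsum 0)]
    simp
  have e2 : ∑' n : ℕ, x ^ (n+1) / (n+1)! = x + ∑' n : ℕ, x ^ (n+2) / (n+2)! := by
    have := Summable.tsum_eq_zero_add (f := fun n : ℕ => x ^ (n+1) / (n+1)!) ?_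
    · simpa using this
    · have : (fun n : ℕ => x ^ (n+1) / (n+1)!) = fun n : ℕ => x * (x ^ n / (n+1)!) := by
        funext n; ring
      rw [this]
      exact (hsum 1).mul_left x
  have e3 : ∑' n : ℕ, x ^ (n+2) / (n+2)! = x ^ 2 * ∑' n : ℕ, x ^ n / (n+2)! := by
    rw [← tsum_mul_left]
    exact tsum_congr fun n => by ring
  rw [hexp, e1, e2, e3]; ring

/-- monotonicity of (e^t - 1 - t)/t^2 -/
private lemma quad_mono {a b : ℝ} (ha : 0 < a) (hab : a ≤ b) :
    (Real.exp a - 1 - a) / a ^ 2 ≤ (Real.exp b - 1 - b) / b ^ 2 := by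
  have hb : 0 < b := lt_of_lt_of_le ha hab
  rw [exp_sub_eq, exp_sub_eq, mul_comm, mul_div_assoc, mul_comm (b^2), mul_div_assoc,
    div_self (by positivity : (a:ℝ)^2 ≠ 0), div_self (by positivity : (b:ℝ)^2 ≠ 0),
    mul_one, mul_one]
  apply (summable_aux a).tsum_le_tsum _ (summable_aux b)
  intro n
  apply div_le_div_of_nonneg_right ?_ (by positivity)
  exact pow_le_pow_left₀ ha.le hab n

/-- f(z) = e^z - 1 - z satisfies f(z) ≤ f(s) when |z| ≤ s -/
private lemma exp_sub_le {z s : ℝ} (h : |z| ≤ s) :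
    Real.exp z - 1 - z ≤ Real.exp s - 1 - s := by
  have key : ∀ u v : ℝ, 0 ≤ u → u ≤ v → Real.exp u - 1 - u ≤ Real.exp v - 1 - v := by
    intro u v hu huv
    have h1 : Real.exp v - Real.exp u = Real.exp u * (Real.exp (v - u) - 1) := by
      rw [mul_sub, ← Real.exp_add]; ring_nf
    have h2 : v - u ≤ Real.exp u * (Real.exp (v - u) - 1) := by
      calc v - u ≤ Real.exp (v - u) - 1 := by
              have := Real.add_one_le_exp (v - u); linarith
        _ ≤ Real.exp u * (Real.exp (v - u) - 1) := by
              apply le_mul_of_one_le_left ?_ (Real.one_le_exp hu)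
              have := Real.add_one_le_exp (v - u); linarith
    linarith
  rcases le_or_gt 0 z with hz | hz
  · exact key z s hz (le_trans (le_abs_self z) h)
  · have hz' : Real.exp z - 1 - z ≤ Real.exp (-z) - 1 - (-z) := by
      have hs : (0:ℝ) < -z := by linarith
      have hsinh : -z ≤ Real.sinh (-z) := Real.self_le_sinh_iff.mpr hs.le
      rw [Real.sinh_eq] at hsinh
      simp only [neg_neg] at hsinh
      linarith
    refine hz'.trans (key (-z) s (by linarith) ?_)
    rw [abs_of_neg hz] at h; exact h


set_option maxHeartbeats 2000000 in
theorem stmt_6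
    {Ω : Type*} {m0 : MeasurableSpace Ω} {μ : Measure Ω} [IsProbabilityMeasure μ]
    (ℱ : Filtration ℕ m0) (X : ℕ → Ω → ℝ) (hadp : Adapted ℱ X)
    (x0 : ℝ) (hX0 : ∀ᵐ ω ∂μ, X 0 ω = x0)
    (k ε K : ℝ) (hk : 0 < k) (hε0 : 0 < ε) (hεk : ε ≤ k)
    (hbdd : ∀ n : ℕ, ∀ᵐ ω ∂μ, |X (n + 1) ω - X n ω| ≤ k)
    (hdrift : ∀ n : ℕ, ∀ᵐ ω ∂μ, K ≤ X n ω →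
      (μ[(fun ω' => X (n + 1) ω' - X n ω') | ℱ n]) ω ≤ -ε)
    (lam : ℝ) (hlam : 0 < lam)
    (c η ρ D : ℝ)
    (hc : c = (Real.exp (lam * k) - 1 - lam * k) / lam ^ 2)
    (hη0 : 0 < η) (hηlt : η < min lam (ε / (2 * c)))
    (hρ : ρ = 1 - η * ε / 2)
    (hD : D = Real.exp (lam * k)) :
    ∀ M : ℝ,
      (1 - D * Real.exp (η * (K - M)) / (1 - ρ) ≤
        Filter.liminf (fun n => (μ {ω | X n ω < M}).toReal) Filter.atTop) ∧
      (Filter.limsup (fun n => (μ {ω | M ≤ X n ω}).toReal) Filter.atTop ≤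
        D * Real.exp (η * (K - M)) / (1 - ρ)) := by
  have hηlam : η < lam := lt_of_lt_of_le hηlt (min_le_left _ _)
  have hc0 : 0 < c := by
    rw [hc]
    apply _root_.div_pos ?_ (by positivity)
    have h := Real.add_one_lt_exp (show lam * k ≠ 0 by positivity)
    linarith
  have hηε : η < ε / (2 * c) := lt_of_lt_of_le hηlt (min_le_right _ _)
  have hcη : c * η < ε / 2 := by
    rw [lt_div_iff₀ (mul_pos two_pos hc0)] at hηε
    linarith
  -- pointwise exponential inequality
  have hkey : ∀ y : ℝ, |y| ≤ k → Real.exp (η * y) ≤ 1 + η * y + c * η ^ 2 := by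
    intro y hy
    have h1 : Real.exp (η * y) - 1 - η * y ≤ Real.exp (η * k) - 1 - η * k := by
      apply exp_sub_le
      rw [abs_mul, abs_of_pos hη0]
      exact mul_le_mul_of_nonneg_left hy hη0.le
    have h2 : (Real.exp (η * k) - 1 - η * k) / η ^ 2 ≤ c := by
      have hm := quad_mono (a := η * k) (b := lam * k) (by positivity)
        (mul_le_mul_of_nonneg_right hηlam.le hk.le)
      rw [hc]
      have e1 : (Real.exp (η * k) - 1 - η * k) / η ^ 2
          = ((Real.exp (η * k) - 1 - η * k) / (η * k) ^ 2) * k ^ 2 := by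
        field_simp
      have e2 : (Real.exp (lam * k) - 1 - lam * k) / lam ^ 2
          = ((Real.exp (lam * k) - 1 - lam * k) / (lam * k) ^ 2) * k ^ 2 := by
        field_simp
      rw [e1, e2]
      exact mul_le_mul_of_nonneg_right hm (by positivity)
    have h3 : Real.exp (η * k) - 1 - η * k ≤ c * η ^ 2 := by
      have := mul_le_mul_of_nonneg_right h2 (by positivity : (0:ℝ) ≤ η ^ 2)
      rwa [div_mul_cancel₀ _ (by positivity : (η:ℝ) ^ 2 ≠ 0)] at this
    linarith
  have hcη2 : c * η ^ 2 ≤ η * ε / 2 := by nlinarith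
  have hρpos : 0 < ρ := by
    have h := hkey (-ε) (by rw [abs_neg, abs_of_pos hε0]; exact hεk)
    have h2 := Real.exp_pos (η * (-ε))
    rw [hρ]; nlinarith
  have hρ1 : ρ < 1 := by rw [hρ]; nlinarith
  have h1ρ : 0 < 1 - ρ := by linarith
  have hDpos : 0 < D := hD ▸ Real.exp_pos _
  -- measurability and integrability
  have hle := ℱ.le
  have hXsm : ∀ n, StronglyMeasurable[m0] (X n) := fun n => ((hadp n).mono (hle n) le_rfl).stronglyMeasurable
  set Y : ℕ → Ω → ℝ := fun n ω => Real.exp (η * X n ω) with hYdef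
  have hYsm : ∀ n, StronglyMeasurable[m0] (Y n) := fun n =>
    Real.continuous_exp.comp_stronglyMeasurable ((hXsm n).const_mul η)
  have hYsm' : ∀ n, StronglyMeasurable[ℱ n] (Y n) := fun n =>
    Real.continuous_exp.comp_stronglyMeasurable ((hadp n).const_mul η).stronglyMeasurable
  have hXbd : ∀ n, ∀ᵐ ω ∂μ, X n ω ≤ x0 + n * k := by
    intro n
    induction n with
    | zero => filter_upwards [hX0] with ω h; simp [h]
    | succ n ih =>
      filter_upwards [ih, hbdd n] with ω h1 h2
      have h3 := (abs_le.mp h2).2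
      push_cast
      push_cast at h1
      linarith
  have hYpos : ∀ n ω, 0 < Y n ω := fun n ω => Real.exp_pos _
  have hYint : ∀ n, Integrable (Y n) μ := by
    intro n
    refine Integrable.mono' (integrable_const (Real.exp (η * (x0 + n * k))))
      (hYsm n).aestronglyMeasurable ?_
    filter_upwards [hXbd n] with ω h
    rw [Real.norm_eq_abs, abs_of_pos (hYpos n ω)]
    exact Real.exp_le_exp.mpr (mul_le_mul_of_nonneg_left h hη0.le)
  have hEint : ∀ n, Integrable (fun ω => Real.exp (η * (X (n + 1) ω - X n ω))) μ := by
    intro n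
    refine Integrable.mono' (integrable_const (Real.exp (η * k)))
      (Real.continuous_exp.comp_stronglyMeasurable
        (((hXsm (n + 1)).sub (hXsm n)).const_mul η)).aestronglyMeasurable ?_
    filter_upwards [hbdd n] with ω h
    rw [Real.norm_eq_abs, abs_of_pos (Real.exp_pos _)]
    exact Real.exp_le_exp.mpr (mul_le_mul_of_nonneg_left ((le_abs_self _).trans h) hη0.le)
  have hΔint : ∀ n, Integrable (fun ω => X (n + 1) ω - X n ω) μ := by
    intro n
    refine Integrable.mono' (integrable_const k)
      (((hXsm (n + 1)).sub (hXsm n))).aestronglyMeasurable ?_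
    filter_upwards [hbdd n] with ω h
    rwa [Real.norm_eq_abs]
  -- conditional expectation bounds
  have hcond : ∀ n, ∀ᵐ ω ∂μ,
      (μ[(fun ω' => Real.exp (η * (X (n + 1) ω' - X n ω'))) | ℱ n]) ω ≤ D ∧
      (K ≤ X n ω → (μ[(fun ω' => Real.exp (η * (X (n + 1) ω' - X n ω'))) | ℱ n]) ω ≤ ρ) := by
    intro n
    have hbd1 : ∀ᵐ ω ∂μ,
        (μ[(fun ω' => Real.exp (η * (X (n + 1) ω' - X n ω'))) | ℱ n]) ω ≤ D := by
      have hmono := condExp_mono (m := ℱ n) (μ := μ) (hEint n) (integrable_const D) ?_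
      · filter_upwards [hmono] with ω h
        rwa [condExp_const (hle n)] at h
      · filter_upwards [hbdd n] with ω h
        rw [hD]
        apply Real.exp_le_exp.mpr
        calc η * (X (n + 1) ω - X n ω) ≤ η * k :=
              mul_le_mul_of_nonneg_left ((le_abs_self _).trans h) hη0.le
          _ ≤ lam * k := mul_le_mul_of_nonneg_right hηlam.le hk.le
    -- affine bound on the conditional expectation
    have hmono2 := condExp_mono (m := ℱ n) (μ := μ) (hEint n)
      ((integrable_const ((1:ℝ) + c * η ^ 2)).add ((hΔint n).smul η)) ?_
    · have hadd := condExp_add (m := ℱ n) (μ := μ)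
        (integrable_const ((1:ℝ) + c * η ^ 2)) ((hΔint n).smul η)
      have hsmul := condExp_smul (m := ℱ n) (μ := μ) η (fun ω' => X (n + 1) ω' - X n ω')
      filter_upwards [hbd1, hmono2, hadd, hsmul, hdrift n] with ω h1 h2 h3 h4 h5
      refine ⟨h1, fun hK => ?_⟩
      rw [h3] at h2
      simp only [Pi.add_apply, Pi.smul_apply, smul_eq_mul, condExp_const (hle n)] at h2 h4
      rw [h4] at h2
      have h6 := h5 hK
      have : (μ[(fun ω' => Real.exp (η * (X (n + 1) ω' - X n ω'))) | ℱ n]) ω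
          ≤ 1 + c * η ^ 2 + η * (-ε) := by
        refine h2.trans ?_
        have := mul_le_mul_of_nonneg_left h6 hη0.le
        linarith
      rw [hρ]
      linarith [hcη2, this]
    · filter_upwards [hbdd n] with ω h
      have := hkey (X (n + 1) ω - X n ω) h
      simp only [Pi.add_apply, Pi.smul_apply, smul_eq_mul]
      linarith
  -- the recursion for ∫ Y n
  have hrec : ∀ n, ∫ ω, Y (n + 1) ω ∂μ ≤ ρ * ∫ ω, Y n ω ∂μ + D * Real.exp (η * K) := by
    intro n
    have hprod : (Y n * fun ω => Real.exp (η * (X (n + 1) ω - X n ω))) = Y (n + 1) := by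
      funext ω
      simp only [hYdef, Pi.mul_apply, ← Real.exp_add]
      ring_nf
    have hpull : μ[Y n * (fun ω => Real.exp (η * (X (n + 1) ω - X n ω))) | ℱ n]
        =ᵐ[μ] Y n * μ[(fun ω => Real.exp (η * (X (n + 1) ω - X n ω))) | ℱ n] :=
      condExp_mul_of_stronglyMeasurable_left (hYsm' n) (hprod ▸ hYint (n + 1)) (hEint n)
    have hcondint : Integrable
        (Y n * μ[(fun ω => Real.exp (η * (X (n + 1) ω - X n ω))) | ℱ n]) μ :=
      integrable_condExp.congr (hprod ▸ hpull)
    have hint1 : ∫ ω, Y (n + 1) ω ∂μ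
        = ∫ ω, (Y n * μ[(fun ω => Real.exp (η * (X (n + 1) ω - X n ω))) | ℱ n]) ω ∂μ := by
      rw [← integral_condExp (hle n) (f := Y (n+1))]
      exact integral_congr_ae (hprod ▸ hpull)
    rw [hint1]
    have hmono3 : ∫ ω, (Y n * μ[(fun ω => Real.exp (η * (X (n + 1) ω - X n ω))) | ℱ n]) ω ∂μ
        ≤ ∫ ω, (ρ * Y n ω + D * Real.exp (η * K)) ∂μ := by
      apply integral_mono_ae hcondint (((hYint n).const_mul ρ).add (integrable_const _))
      filter_upwards [hcond n] with ω hω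
      rcases hω with ⟨hωD, hωρ⟩
      simp only [Pi.mul_apply, Pi.add_apply]
      rcases le_or_gt K (X n ω) with hK | hK
      · have h1 : Y n ω * (μ[(fun ω => Real.exp (η * (X (n + 1) ω - X n ω))) | ℱ n]) ω
            ≤ Y n ω * ρ := mul_le_mul_of_nonneg_left (hωρ hK) (hYpos n ω).le
        nlinarith [Real.exp_pos (η * K), hYpos n ω]
      · have hYK : Y n ω ≤ Real.exp (η * K) := by
          simp only [hYdef]
          exact Real.exp_le_exp.mpr (mul_le_mul_of_nonneg_left hK.le hη0.le)
        have h1 : Y n ω * (μ[(fun ω => Real.exp (η * (X (n + 1) ω - X n ω))) | ℱ n]) ω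
            ≤ Y n ω * D := mul_le_mul_of_nonneg_left hωD (hYpos n ω).le
        nlinarith [hYpos n ω]
    refine hmono3.trans ?_
    rw [integral_add ((hYint n).const_mul ρ) (integrable_const _), integral_const,
      integral_const_mul, probReal_univ]
    simp
  -- explicit bound by induction
  have hA : ∀ n, ∫ ω, Y n ω ∂μ
      ≤ ρ ^ n * Real.exp (η * x0) + D * Real.exp (η * K) / (1 - ρ) * (1 - ρ ^ n) := by
    intro n
    induction n with
    | zero =>
      have h0 : ∫ ω, Y 0 ω ∂μ = Real.exp (η * x0) := by
        rw [show (Real.exp (η * x0)) = ∫ _ω, Real.exp (η * x0) ∂μ by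
          rw [integral_const, probReal_univ]; simp]
        apply integral_congr_ae
        filter_upwards [hX0] with ω h
        simp [hYdef, h]
      simp [h0]
    | succ n ih =>
      calc ∫ ω, Y (n + 1) ω ∂μ ≤ ρ * ∫ ω, Y n ω ∂μ + D * Real.exp (η * K) := hrec n
        _ ≤ ρ * (ρ ^ n * Real.exp (η * x0) + D * Real.exp (η * K) / (1 - ρ) * (1 - ρ ^ n))
            + D * Real.exp (η * K) := by nlinarith [mul_le_mul_of_nonneg_left ih hρpos.le]
        _ = ρ ^ (n + 1) * Real.exp (η * x0)
            + D * Real.exp (η * K) / (1 - ρ) * (1 - ρ ^ (n + 1)) := by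
          field_simp
          ring
  intro M
  set A : ℕ → ℝ := fun n =>
    ρ ^ n * Real.exp (η * x0) + D * Real.exp (η * K) / (1 - ρ) * (1 - ρ ^ n) with hAdef
  set b : ℕ → ℝ := fun n => Real.exp (-(η * M)) * A n with hbdef
  set C : ℝ := D * Real.exp (η * (K - M)) / (1 - ρ) with hCdef
  have hMarkov : ∀ n, (μ {ω | M ≤ X n ω}).toReal ≤ b n := by
    intro n
    have hset : {ω | M ≤ X n ω} = {ω | Real.exp (η * M) ≤ Y n ω} := by
      ext ω
      simp only [Set.mem_setOf_eq, hYdef, Real.exp_le_exp]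
      exact ⟨fun h => mul_le_mul_of_nonneg_left h hη0.le, fun h => le_of_mul_le_mul_left h hη0⟩
    have h := mul_meas_ge_le_integral_of_nonneg
      (ae_of_all μ fun ω => (hYpos n ω).le) (hYint n) (Real.exp (η * M))
    have hepos := Real.exp_pos (η * M)
    rw [hset, hbdef]
    simp only
    rw [Real.exp_neg, ← div_eq_inv_mul, le_div_iff₀ hepos, mul_comm]
    exact h.trans (hA n)
  have hρt : Tendsto (fun n : ℕ => ρ ^ n) atTop (𝓝 0) :=
    tendsto_pow_atTop_nhds_zero_of_lt_one hρpos.le hρ1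
  have hbt : Tendsto b atTop (𝓝 C) := by
    have h1 : Tendsto A atTop (𝓝 (D * Real.exp (η * K) / (1 - ρ))) := by
      have h0 := (hρt.mul_const (Real.exp (η * x0))).add
        (((tendsto_const_nhds : Tendsto (fun _ : ℕ => (1:ℝ)) atTop (𝓝 1)).sub
          hρt).const_mul (D * Real.exp (η * K) / (1 - ρ)))
      rw [hAdef]
      simp only [zero_mul, sub_zero, mul_one, zero_add] at h0 ⊢
      convert h0 using 2 with n
    have h2 := h1.const_mul (Real.exp (-(η * M)))
    have heq : Real.exp (-(η * M)) * (D * Real.exp (η * K) / (1 - ρ)) = C := by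
      rw [hCdef, show η * (K - M) = η * K + -(η * M) by ring, Real.exp_add]
      field_simp
    rw [hbdef]
    simpa [heq] using h2
  have hlimsup : limsup (fun n => (μ {ω | M ≤ X n ω}).toReal) atTop ≤ C := by
    have h1 : limsup (fun n => (μ {ω | M ≤ X n ω}).toReal) atTop ≤ limsup b atTop := by
      refine limsup_le_limsup (Eventually.of_forall hMarkov) ?_ ?_
      · exact IsBoundedUnder.isCoboundedUnder_le
          (isBoundedUnder_of ⟨0, fun n => ENNReal.toReal_nonneg⟩)
      · exact hbt.isBoundedUnder_le
    rwa [hbt.limsup_eq] at h1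
  refine ⟨?_, hlimsup⟩
  have hcompl : ∀ n, (μ {ω | X n ω < M}).toReal = 1 - (μ {ω | M ≤ X n ω}).toReal := by
    intro n
    have hms : MeasurableSet {ω | M ≤ X n ω} :=
      measurableSet_le measurable_const (hXsm n).measurable
    have hseq : {ω | X n ω < M} = {ω | M ≤ X n ω}ᶜ := by
      ext ω; simp [not_le]
    rw [hseq, prob_compl_eq_one_sub hms,
      ENNReal.toReal_sub_of_le prob_le_one (by simp), ENNReal.toReal_one]
  have hvt : Tendsto (fun n => 1 - b n) atTop (𝓝 (1 - C)) := tendsto_const_nhds.sub hbt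
  have h2 : liminf (fun n => 1 - b n) atTop
      ≤ liminf (fun n => (μ {ω | X n ω < M}).toReal) atTop := by
    refine liminf_le_liminf (Eventually.of_forall fun n => ?_) ?_ ?_
    · rw [hcompl n]
      have := hMarkov n
      linarith
    · exact hvt.isBoundedUnder_ge
    · exact IsBoundedUnder.isCoboundedUnder_ge
        (isBoundedUnder_of ⟨1, fun n => by
          have := hcompl n
          have h2 := ENNReal.toReal_nonneg (a := μ {ω | M ≤ X n ω})
          simp only [ge_iff_le]
          rw [this]; linarith⟩)
  rwa [hvt.liminf_eq] at h2
end

section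
/- Occupation-time bound: under the stated drift hypotheses, let M ∈ ℝ be such that p₀(M) := 1 − (D e^{η(K − M)})/(1 − ρ) > 0. Then for every ε' > 0 there exist a constant C < ∞ and γ ∈ (0,1) such that for all n ≥ 1, P( (1/n) Σ_{j=1}^{n} 𝟙{X_j < M} ≤ p₀(M)(1 − ε') ) ≤ C γ^n. -/
open MeasureTheory Filter

lemma exp_ssub (u : ℝ) : Real.exp u - 1 - u = ∑' n : ℕ, u^(n+2)/(Nat.factorial (n+2) : ℝ) := by
  have hs := Real.summable_pow_div_factorial u
  have h := (hs.sum_add_tsum_nat_add 2).symm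
  have he : Real.exp u = ∑' n : ℕ, u ^ n / (Nat.factorial n : ℝ) := by
    rw [Real.exp_eq_exp_ℝ, NormedSpace.exp_eq_tsum_div]
  rw [he, h]
  simp [Finset.sum_range_succ, Nat.factorial]
  ring

lemma key_mono {u z : ℝ} (hu : 0 ≤ u) (huz : u ≤ z) :
    z^2*(Real.exp u - 1 - u) ≤ u^2*(Real.exp z - 1 - z) := by
  have hsu : Summable (fun n : ℕ => u^(n+2)/(Nat.factorial (n+2) : ℝ)) :=
    (summable_nat_add_iff (f := fun n => u ^ n / (Nat.factorial n : ℝ)) 2).2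
      (Real.summable_pow_div_factorial u)
  have hsz : Summable (fun n : ℕ => z^(n+2)/(Nat.factorial (n+2) : ℝ)) :=
    (summable_nat_add_iff (f := fun n => z ^ n / (Nat.factorial n : ℝ)) 2).2
      (Real.summable_pow_div_factorial z)
  rw [exp_ssub, exp_ssub, ← tsum_mul_left, ← tsum_mul_left]
  refine Summable.tsum_le_tsum (fun n => ?_) (hsu.mul_left _) (hsz.mul_left _)
  have hp := pow_le_pow_left₀ hu huz n
  have h1 : z^2 * u^(n+2) ≤ u^2 * z^(n+2) := by
    have h2 : z^2 * u^(n+2) = (u^n) * (u*z)^2 := by ring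
    have h3 : u^2 * z^(n+2) = (z^n) * (u*z)^2 := by ring
    rw [h2, h3]
    exact mul_le_mul_of_nonneg_right hp (sq_nonneg _)
  have hf : (0:ℝ) < (Nat.factorial (n+2) : ℝ) := by positivity
  rw [mul_div_assoc', mul_div_assoc']
  exact div_le_div_of_nonneg_right h1 hf.le

lemma exp_sub_mono {p q : ℝ} (hp : 0 ≤ p) (hpq : p ≤ q) :
    Real.exp p - p ≤ Real.exp q - q := by
  have h1 : Real.exp q = Real.exp p * Real.exp (q-p) := by
    rw [← Real.exp_add]; ring_nf
  nlinarith [Real.add_one_le_exp (q - p), Real.one_le_exp hp,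
    mul_le_mul_of_nonneg_left (Real.add_one_le_exp (q-p)) (Real.exp_nonneg p)]

lemma exp_sub_abs {y a : ℝ} (h : |y| ≤ a) : Real.exp y - y ≤ Real.exp a - a := by
  rcases abs_le.1 h with ⟨h1, h2⟩
  rcases le_or_gt 0 y with hy | hy
  · exact exp_sub_mono hy h2
  · have hy' : 0 ≤ -y := by linarith
    have hs : -y ≤ Real.sinh (-y) := Real.self_le_sinh_iff.2 hy'
    rw [Real.sinh_eq] at hs
    have := exp_sub_mono hy' (by linarith : -y ≤ a)
    simp only [neg_neg] at this hs
    linarith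

set_option maxHeartbeats 800000 in
lemma param_choice (ρ P t : ℝ) (hρ0 : 0 < ρ) (hρ1 : ρ < 1) (hP0 : 0 < P) (hP1 : P < 1)
    (hPt : P < t) (ht1 : t ≤ 1) :
    ∃ θ α : ℝ, 0 < θ ∧ 0 < α ∧
      (1 + (Real.exp θ - 1) * (1 + α)) * ((1 - ρ) * P)
        ≤ (ρ * (1 + (Real.exp θ - 1) * (1 + α)) - 1) * α ∧
      ρ * (1 + (Real.exp θ - 1) * (1 + α)) * Real.exp (-(θ * t)) < 1 := by
  have ht0 : 0 < t := hP0.trans hPt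
  obtain ⟨e, he, he2⟩ : ∃ e : ℝ, e = Real.exp 1 ∧ 2 ≤ e :=
    ⟨Real.exp 1, rfl, by have := Real.add_one_le_exp 1; linarith⟩
  obtain ⟨x, hx0, hx1, hx3, hxte⟩ :
      ∃ x : ℝ, 0 < x ∧ x ≤ 1 ∧ 3*x ≤ t - P ∧ 2*e*x ≤ t := by
    refine ⟨min ((t - P)/3) (min (t/(2*e)) 1), lt_min (by linarith)
      (lt_min (by positivity) one_pos), le_trans (min_le_right _ _) (min_le_right _ _), ?_, ?_⟩
    · have := min_le_left ((t - P)/3) (min (t/(2*e)) 1); linarith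
    · have h := le_trans (min_le_right ((t - P)/3) _) (min_le_left (t/(2*e)) 1)
      rw [le_div_iff₀ (by positivity)] at h; linarith
  obtain ⟨θ, hθ0, hθt⟩ : ∃ θ : ℝ, 0 < θ ∧ θ*t = (1-ρ)*x :=
    ⟨(1-ρ)*x/t, div_pos (mul_pos (by linarith) hx0) ht0, by field_simp⟩
  have hθe : 2*(θ*e) ≤ 1-ρ := by
    have h1 : 2*e*(θ*t) ≤ (1-ρ)*t := by
      rw [hθt]
      calc 2*e*((1-ρ)*x) = (1-ρ)*(2*e*x) := by ring
        _ ≤ (1-ρ)*t := by nlinarith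
    have h2 : (2*(θ*e) - (1-ρ))*t ≤ 0 := by nlinarith
    nlinarith
  have hθ1 : θ ≤ 1 := by nlinarith
  obtain ⟨E, hEdef, hE1, hE0⟩ : ∃ E : ℝ, Real.exp θ = E ∧ θ + 1 ≤ E ∧ 0 < E :=
    ⟨Real.exp θ, rfl, Real.add_one_le_exp θ, Real.exp_pos θ⟩
  have hE1' : 0 < E - 1 := by nlinarith
  have hE2 : E*(1-θ) ≤ 1 := by
    have h := Real.add_one_le_exp (-θ)
    rw [Real.exp_neg, hEdef] at h
    have h2 : E * (-θ + 1) ≤ E * E⁻¹ := mul_le_mul_of_nonneg_left h hE0.le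
    rw [mul_inv_cancel₀ hE0.ne'] at h2
    linarith
  have hEe : E ≤ e := by
    rw [← hEdef, he]; exact Real.exp_le_exp.2 hθ1
  have hd : (1-θ)*(E-1) ≤ θ := by nlinarith
  obtain ⟨s, hs0, hsρ⟩ : ∃ s : ℝ, 0 < s ∧ ρ*s = (1-ρ)*(1+x) :=
    ⟨(1-ρ)*(1+x)/ρ, div_pos (mul_pos (by linarith) (by linarith)) hρ0, by field_simp⟩
  obtain ⟨α, hαE⟩ : ∃ α : ℝ, (E-1)*(1+α) = s :=
    ⟨s/(E-1) - 1, by field_simp; ring⟩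
  have hEs : E - 1 < s := by
    have h1 : E - 1 ≤ θ*E := by nlinarith [hE2]
    have h2 : θ*E ≤ θ*e := by nlinarith [hEe, hθ0]
    have h3 : ρ*s ≥ 1-ρ := by nlinarith [hsρ, hx0, hρ1]
    have h4 : ρ*s ≤ s := by nlinarith [mul_nonneg hs0.le (by linarith : (0:ℝ) ≤ 1-ρ)]
    linarith
  have hα0 : 0 < α := by
    have h6 : (E-1)*α = s - (E-1) := by linear_combination hαE
    have h7 : 0 < (E-1)*α := by linarith
    by_contra hcon
    push_neg at hcon
    nlinarith
  have hβ : ρ*(1+s) = 1 + (1-ρ)*x := by linear_combination hsρ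
  refine ⟨θ, α, hθ0, hα0, ?_, ?_⟩
  · rw [hEdef, hαE]
    have hid : ρ*(x*s) = θ*(t*(1+x)) := by
      linear_combination x*hsρ - (1+x)*hθt
    have hαE2 : (E-1)*α = s - (E-1) := by linarith [hαE]
    have hstep1 : t*(1+x)*(1-θ) - ρ*x ≤ ρ*(x*α) := by
      have hfac : 0 ≤ (ρ*(x*α) - (t*(1+x)*(1-θ) - ρ*x)) * (θ*(E-1)) := by
        have hexp : (ρ*(x*α) - (t*(1+x)*(1-θ) - ρ*x)) * (θ*(E-1))
            = (θ - (1-θ)*(E-1)) * (ρ*(x*s)) := by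
          linear_combination (ρ*x*θ)*hαE2 + ((1-θ)*(E-1))*hid
        rw [hexp]
        have h4 : 0 ≤ θ - (1-θ)*(E-1) := by linarith
        have h5 : 0 ≤ ρ*(x*s) := by positivity
        exact mul_nonneg h4 h5
      nlinarith [mul_pos hθ0 hE1']
    have hstep2 : ρ*((1+s)*P) ≤ t*(1+x)*(1-θ) - ρ*x := by
      have hexpand : t*(1+x)*(1-θ) = t*(1+x) - (1+x)*((1-ρ)*x) := by
        linear_combination (-(1:ℝ)-x)*hθt
      rw [hexpand]
      have h1 : ρ*((1+s)*P) = (1 + (1-ρ)*x)*P := by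
        linear_combination P*hβ
      rw [h1]
      nlinarith [mul_nonneg (mul_nonneg (by linarith : (0:ℝ) ≤ 1-ρ) hx0.le)
          (by linarith : (0:ℝ) ≤ 1 - x),
        mul_nonneg (mul_nonneg (by linarith : (0:ℝ) ≤ 1-ρ) hx0.le)
          (by linarith : (0:ℝ) ≤ 1 - P),
        mul_nonneg ht0.le hx0.le, mul_nonneg hρ0.le hx0.le, hx3]
    have hPs : (1+s)*P ≤ x*α :=
      le_of_mul_le_mul_left (by linarith [hstep2.trans hstep1]) hρ0
    have hβ' : ρ * (1 + s) - 1 = (1-ρ)*x := by linarith [hβ]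
    rw [hβ']
    calc (1+s)*((1-ρ)*P) = (1-ρ)*((1+s)*P) := by ring
      _ ≤ (1-ρ)*(x*α) := by nlinarith
      _ = (1-ρ)*x*α := by ring
  · rw [hEdef, hαE, hθt, hβ, Real.exp_neg]
    have hu0 : 0 < (1-ρ)*x := mul_pos (by linarith) hx0
    have h := Real.add_one_lt_exp (ne_of_gt hu0)
    rw [mul_inv_lt_iff₀ (Real.exp_pos _), one_mul]
    linarith


lemma scalar_facts {k ε lam η c ρ D : ℝ} (hk : 0 < k) (hε0 : 0 < ε) (hεk : ε ≤ k)
    (hlam : 0 < lam) (hc : c = (Real.exp (lam * k) - 1 - lam * k) / lam ^ 2)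
    (hη0 : 0 < η) (hηlam : η < lam) (hηc : η < ε / (2 * c))
    (hρ : ρ = 1 - η * ε / 2) (hD : D = Real.exp (lam * k)) :
    0 < c ∧ ρ < 1 ∧ 0 < ρ ∧ Real.exp (η*k) ≤ D ∧
      Real.exp (η*k) - 1 - η*k ≤ η*ε/2 := by
  have hlk : 0 < lam * k := mul_pos hlam hk
  have hcnum : lam^2/4 * k^2 < Real.exp (lam * k) - 1 - lam * k := by
    have h1 := Real.add_one_lt_exp (ne_of_gt (by positivity : (0:ℝ) < lam*k/2))
    have h2 : Real.exp (lam*k) = Real.exp (lam*k/2) * Real.exp (lam*k/2) := by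
      rw [← Real.exp_add]; ring_nf
    nlinarith [Real.exp_pos (lam*k/2)]
  have hc0 : 0 < c := by
    rw [hc]; apply div_pos (by nlinarith) (by positivity)
  have h2cη : η * (2*c) < ε := by
    rw [lt_div_iff₀ (by positivity)] at hηc
    linarith
  have hεη : η * ε < 2 := by
    have hck : k^2*lam^2 < 4*(Real.exp (lam * k) - 1 - lam * k) := by nlinarith
    have hck2 : k^2 < 4*c := by
      rw [hc]
      rw [show (4:ℝ)*((Real.exp (lam*k) - 1 - lam*k)/lam^2)
          = (4*(Real.exp (lam*k) - 1 - lam*k))/lam^2 by ring,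
        lt_div_iff₀ (by positivity : (0:ℝ) < lam^2)]
      nlinarith
    nlinarith [mul_lt_mul_of_pos_right h2cη hε0, hεk, hε0, hη0, hc0]
  refine ⟨hc0, by rw [hρ]; nlinarith, by rw [hρ]; linarith, ?_, ?_⟩
  · rw [hD]; exact Real.exp_le_exp.2 (by nlinarith)
  · have hkey := key_mono (u := η*k) (z := lam*k) (by positivity) (by nlinarith)
    have hNc : Real.exp (lam*k) - 1 - lam*k = c * lam^2 := by
      rw [hc]; field_simp
    rw [hNc] at hkey
    have h2 : Real.exp (η*k) - 1 - η*k ≤ η^2*c := by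
      nlinarith [mul_pos (mul_pos hlam hlam) (mul_pos hk hk), sq_nonneg (η*k)]
    nlinarith [mul_pos hη0 hc0]

lemma integrable_of_abs_bound {Ω : Type*} {m0 : MeasurableSpace Ω} {μ : Measure Ω}
    [IsProbabilityMeasure μ] {f : Ω → ℝ} (hf : AEStronglyMeasurable f μ) {Cb : ℝ}
    (h : ∀ᵐ ω ∂μ, |f ω| ≤ Cb) : Integrable f μ :=
  (integrable_const Cb).mono' hf (by simpa [Real.norm_eq_abs] using h)

set_option maxHeartbeats 4000000 in
theorem stmt_7
    {Ω : Type*} {m0 : MeasurableSpace Ω} {μ : Measure Ω} [IsProbabilityMeasure μ]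
    (ℱ : Filtration ℕ m0) (X : ℕ → Ω → ℝ) (hadp : Adapted ℱ X)
    (x0 : ℝ) (hX0 : ∀ᵐ ω ∂μ, X 0 ω = x0)
    (k ε K : ℝ) (hk : 0 < k) (hε0 : 0 < ε) (hεk : ε ≤ k)
    (hbdd : ∀ n : ℕ, ∀ᵐ ω ∂μ, |X (n + 1) ω - X n ω| ≤ k)
    (hdrift : ∀ n : ℕ, ∀ᵐ ω ∂μ, K ≤ X n ω →
      (μ[(fun ω' => X (n + 1) ω' - X n ω') | ℱ n]) ω ≤ -ε)
    (lam : ℝ) (hlam : 0 < lam)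
    (c η ρ D : ℝ)
    (hc : c = (Real.exp (lam * k) - 1 - lam * k) / lam ^ 2)
    (hη0 : 0 < η) (hηlt : η < min lam (ε / (2 * c)))
    (hρ : ρ = 1 - η * ε / 2)
    (hD : D = Real.exp (lam * k))
    (M p₀ : ℝ) (hp₀ : p₀ = 1 - D * Real.exp (η * (K - M)) / (1 - ρ))
    (hp₀pos : 0 < p₀) :
    ∀ ε' : ℝ, 0 < ε' →
      ∃ C : ℝ, ∃ γ : ℝ, 0 < γ ∧ γ < 1 ∧
        ∀ n : ℕ, 1 ≤ n →
          (μ {ω | (1 / (n : ℝ)) * ∑ j ∈ Finset.Icc 1 n, (if X j ω < M then (1 : ℝ) else 0) ≤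
              p₀ * (1 - ε')}).toReal ≤ C * γ ^ n := by
  intro ε' hε'
  have hηlam : η < lam := lt_of_lt_of_le hηlt (min_le_left _ _)
  have hηc : η < ε / (2 * c) := lt_of_lt_of_le hηlt (min_le_right _ _)
  obtain ⟨hc0, hρ1, hρ0, hD1, hc₀⟩ :=
    scalar_facts hk hε0 hεk hlam hc hη0 hηlam hηc hρ hD
  have h1ρ : 1 - ρ = η*ε/2 := by rw [hρ]; ring
  have h1ρ0 : 0 < 1 - ρ := by linarith
  have hD0 : 0 < D := hD ▸ Real.exp_pos _
  set P := D * Real.exp (η*(K-M)) / (1-ρ) with hPdef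
  have hP0 : 0 < P := div_pos (by positivity) h1ρ0
  have hp₀P : p₀ = 1 - P := hp₀
  have hP1 : P < 1 := by linarith
  set ε'' := min ε' (1/2) with hε''def
  have hε''0 : 0 < ε'' := lt_min hε' (by norm_num)
  have hε''2 : ε'' ≤ 1/2 := min_le_right _ _
  have hε''ε : ε'' ≤ ε' := min_le_left _ _
  set t := 1 - p₀ * (1 - ε'') with htdef
  have hPt : P < t := by
    rw [htdef]
    nlinarith only [mul_pos hp₀pos hε''0, hp₀P, hε''0, hp₀pos]
  have ht1 : t ≤ 1 := by
    rw [htdef]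
    have h := mul_nonneg hp₀pos.le (by linarith only [hε''2] : (0:ℝ) ≤ 1-ε'')
    linarith only [h]
  obtain ⟨θ, α, hθ0, hα0, hA, hB⟩ := param_choice ρ P t hρ0 hρ1 hP0 hP1 hPt ht1
  set s := (Real.exp θ - 1)*(1 + α) with hsdef
  have heθ1 : 1 < Real.exp θ := by
    have h := Real.add_one_le_exp θ; linarith only [h, hθ0]
  have hs0 : 0 < s := mul_pos (by linarith only [heθ1]) (by linarith only [hα0])
  set β := ρ * (1 + s) with hβdef
  have hβ0 : 0 < β := mul_pos hρ0 (by linarith only [hs0])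
  set a := α * Real.exp (η*M) with hadef
  have ha0 : 0 < a := mul_pos hα0 (Real.exp_pos _)
  set b := D * Real.exp (η*K) with hbdef
  have hb0 : 0 < b := mul_pos hD0 (Real.exp_pos _)
  have hba : (1+s)*b ≤ (β-1)*a := by
    have hP' : P*(1-ρ) = D * Real.exp (η*(K-M)) := by
      rw [hPdef]; field_simp
    have hbP : ((1-ρ)*P) * Real.exp (η*M) = b := by
      rw [hbdef]
      have h1 : (1-ρ)*P = D * Real.exp (η*(K-M)) := by rw [mul_comm]; exact hP'
      rw [h1, mul_assoc, ← Real.exp_add]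
      congr 2
      ring
    have hmul := mul_le_mul_of_nonneg_right hA (Real.exp_pos (η*M)).le
    calc (1+s)*b = (1 + s) * ((1 - ρ) * P) * Real.exp (η * M) := by rw [← hbP]; ring
      _ ≤ (ρ * (1 + s) - 1) * α * Real.exp (η * M) := hmul
      _ = (β-1)*a := by rw [hβdef, hadef]; ring
  -- the process T and G
  set T : ℕ → Ω → ℝ :=
    fun n ω => ∑ j ∈ Finset.Icc 1 n, (1 - if X j ω < M then (1:ℝ) else 0) with hTdef
  set G : ℕ → Ω → ℝ :=
    fun n ω => Real.exp (θ * T n ω) * (Real.exp (η * X n ω) + a) with hGdef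
  have hJ01 : ∀ j (ω : Ω), (0:ℝ) ≤ 1 - (if X j ω < M then (1:ℝ) else 0) ∧
      1 - (if X j ω < M then (1:ℝ) else 0) ≤ 1 := by
    intro j ω; split_ifs <;> norm_num
  have hT0 : ∀ n ω, 0 ≤ T n ω :=
    fun n ω => Finset.sum_nonneg (fun j _ => (hJ01 j ω).1)
  have hTle : ∀ n ω, T n ω ≤ n := by
    intro n ω
    calc T n ω ≤ ∑ _j ∈ Finset.Icc 1 n, (1:ℝ) :=
          Finset.sum_le_sum (fun j _ => (hJ01 j ω).2)
      _ = n := by simp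
  have hXm : ∀ n, Measurable (X n) :=
    fun n => ((hadp n : Measurable[ℱ n] (X n))).mono (ℱ.le n) le_rfl
  have hTmF : ∀ n, Measurable[ℱ n] (T n) := by
    intro n
    apply Finset.measurable_sum
    intro j hj
    have hjn : j ≤ n := (Finset.mem_Icc.1 hj).2
    have hXj : Measurable[ℱ n] (X j) := ((hadp j : Measurable[ℱ j] (X j))).mono (ℱ.mono hjn) le_rfl
    exact measurable_const.sub
      (Measurable.ite (measurableSet_lt hXj measurable_const) measurable_const measurable_const)
  have hTm : ∀ n, Measurable (T n) := fun n => (hTmF n).mono (ℱ.le n) le_rfl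
  have hGm : ∀ n, Measurable (G n) := by
    intro n
    exact (((hTm n).const_mul θ).exp).mul ((((hXm n).const_mul η).exp).add_const a)
  -- a.s. bounds on X
  have habs : ∀ n, ∀ᵐ ω ∂μ, |X n ω| ≤ |x0| + n*k := by
    intro n
    induction n with
    | zero =>
      filter_upwards [hX0] with ω h
      simp [h]
    | succ m ih =>
      filter_upwards [ih, hbdd m] with ω h1 h2
      have h3 : |X (m+1) ω| ≤ |X m ω| + |X (m+1) ω - X m ω| := by
        have := abs_add_le (X m ω) (X (m+1) ω - X m ω)
        simpa using this
      push_cast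
      linarith only [h1, h2, h3]
  have hVint : ∀ n, Integrable (fun ω => Real.exp (η * X n ω)) μ := by
    intro n
    apply integrable_of_abs_bound (((hXm n).const_mul η).exp).aestronglyMeasurable
      (Cb := Real.exp (η*(|x0| + n*k)))
    filter_upwards [habs n] with ω h
    rw [abs_of_nonneg (Real.exp_pos _).le]
    apply Real.exp_le_exp.2
    exact mul_le_mul_of_nonneg_left (le_trans (le_abs_self _) h) hη0.le
  have hGint : ∀ n, Integrable (G n) μ := by
    intro n
    apply integrable_of_abs_bound (hGm n).aestronglyMeasurable
      (Cb := Real.exp (θ*n) * (Real.exp (η*(|x0| + n*k)) + a))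
    filter_upwards [habs n] with ω h
    have hg0 : 0 ≤ G n ω := by
      rw [hGdef]
      positivity
    rw [abs_of_nonneg hg0, hGdef]
    apply mul_le_mul
    · exact Real.exp_le_exp.2 (mul_le_mul_of_nonneg_left (hTle n ω) hθ0.le)
    · have h5 : Real.exp (η * X n ω) ≤ Real.exp (η*(|x0| + n*k)) :=
        Real.exp_le_exp.2 (mul_le_mul_of_nonneg_left (le_trans (le_abs_self _) h) hη0.le)
      linarith only [h5]
    · positivity
    · positivity
  -- conditional expectation drift bound
  have hcond : ∀ n, (μ[fun ω => Real.exp (η * X (n+1) ω)|ℱ n]) ≤ᵐ[μ]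
      fun ω => ρ * Real.exp (η * X n ω) + b := by
    intro n
    set Δ : Ω → ℝ := fun ω' => X (n+1) ω' - X n ω' with hΔdef
    have hΔm : Measurable Δ := (hXm (n+1)).sub (hXm n)
    have hΔint : Integrable Δ μ := integrable_of_abs_bound hΔm.aestronglyMeasurable (hbdd n)
    have heΔm : Measurable (fun ω => Real.exp (η * Δ ω)) := (hΔm.const_mul η).exp
    have heΔb : ∀ᵐ ω ∂μ, |Real.exp (η * Δ ω)| ≤ Real.exp (η*k) := by
      filter_upwards [hbdd n] with ω h
      rw [abs_of_nonneg (Real.exp_pos _).le]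
      apply Real.exp_le_exp.2
      calc η * Δ ω ≤ η * |Δ ω| := mul_le_mul_of_nonneg_left (le_abs_self _) hη0.le
        _ ≤ η * k := mul_le_mul_of_nonneg_left h hη0.le
    have heΔint : Integrable (fun ω => Real.exp (η * Δ ω)) μ :=
      integrable_of_abs_bound heΔm.aestronglyMeasurable heΔb
    have hsplit : (fun ω => Real.exp (η * X (n+1) ω))
        = (fun ω => Real.exp (η * X n ω)) * (fun ω => Real.exp (η * Δ ω)) := by
      funext ω
      simp only [Pi.mul_apply, hΔdef]
      rw [← Real.exp_add]
      ring_nf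
    have hVn1int : Integrable
        ((fun ω => Real.exp (η * X n ω)) * (fun ω => Real.exp (η * Δ ω))) μ := by
      rw [← hsplit]; exact hVint (n+1)
    have hXnsm : StronglyMeasurable[ℱ n] (fun ω => Real.exp (η * X n ω)) :=
      (((hadp n : Measurable[ℱ n] (X n)).const_mul η).exp).stronglyMeasurable
    have hpull : μ[(fun ω => Real.exp (η * X n ω)) * (fun ω => Real.exp (η * Δ ω))|ℱ n]
        =ᵐ[μ] (fun ω => Real.exp (η * X n ω)) * μ[(fun ω => Real.exp (η * Δ ω))|ℱ n] :=
      condExp_mul_of_stronglyMeasurable_left hXnsm hVn1int heΔint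
    have haff : (fun ω => Real.exp (η * Δ ω)) ≤ᵐ[μ]
        fun ω => (1 + (Real.exp (η*k) - 1 - η*k)) + η * Δ ω := by
      filter_upwards [hbdd n] with ω h
      have habs2 : |η * Δ ω| ≤ η * k := by
        rw [abs_mul, abs_of_pos hη0]
        exact mul_le_mul_of_nonneg_left h hη0.le
      have h2 := exp_sub_abs habs2
      linarith only [h2]
    have haffint : Integrable (fun ω => (1 + (Real.exp (η*k) - 1 - η*k)) + η * Δ ω) μ :=
      (integrable_const _).add (hΔint.const_mul η)
    have hmono1 := condExp_mono (m := ℱ n) heΔint haffint haff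
    have haffeq : μ[(fun ω => (1 + (Real.exp (η*k) - 1 - η*k)) + η * Δ ω)|ℱ n]
        =ᵐ[μ] fun ω => (1 + (Real.exp (η*k) - 1 - η*k)) + η * (μ[Δ|ℱ n]) ω := by
      have h1 : (fun ω => (1 + (Real.exp (η*k) - 1 - η*k)) + η * Δ ω)
          = (fun _ => (1 + (Real.exp (η*k) - 1 - η*k))) + η • Δ := by
        funext ω; simp [smul_eq_mul]
      rw [h1]
      refine (condExp_add (integrable_const _) (hΔint.smul η) (ℱ n)).trans ?_
      have h2 := condExp_smul (μ := μ) (m := ℱ n) η Δ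
      rw [condExp_const (ℱ.le n)]
      filter_upwards [h2] with ω hω
      simp only [Pi.add_apply, Pi.smul_apply, smul_eq_mul] at hω ⊢
      rw [hω]
    have hDbd : μ[(fun ω => Real.exp (η * Δ ω))|ℱ n] ≤ᵐ[μ] fun _ => Real.exp (η*k) := by
      have h2 := condExp_mono (m := ℱ n) heΔint (integrable_const (Real.exp (η*k)))
        (heΔb.mono fun ω h => (abs_le.1 h).2)
      rw [condExp_const (ℱ.le n)] at h2
      exact h2
    have hpos : (0:Ω → ℝ) ≤ᵐ[μ] μ[(fun ω => Real.exp (η * Δ ω))|ℱ n] :=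
      condExp_nonneg (Eventually.of_forall fun ω => (Real.exp_pos _).le)
    have hVeq : μ[fun ω => Real.exp (η * X (n+1) ω)|ℱ n]
        =ᵐ[μ] (fun ω => Real.exp (η * X n ω)) * μ[(fun ω => Real.exp (η * Δ ω))|ℱ n] := by
      rw [hsplit]; exact hpull
    filter_upwards [hVeq, hmono1, haffeq, hDbd, hpos, hdrift n]
      with ω h1 h2 h3 h4 h5 h6
    rw [h1]
    simp only [Pi.mul_apply]
    by_cases hK : K ≤ X n ω
    · have h7 : (μ[Δ|ℱ n]) ω ≤ -ε := h6 hK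
      have h8 : (μ[(fun ω => Real.exp (η * Δ ω))|ℱ n]) ω ≤ ρ := by
        rw [h3] at h2
        have h9 : η * (μ[Δ|ℱ n]) ω ≤ η * (-ε) := mul_le_mul_of_nonneg_left h7 hη0.le
        rw [hρ]
        have h10 := hc₀
        linarith only [h2, h9, h10]
      have h11 := mul_le_mul_of_nonneg_left h8 (Real.exp_pos (η * X n ω)).le
      have h12 : Real.exp (η * X n ω) * ρ = ρ * Real.exp (η * X n ω) := mul_comm _ _
      linarith only [h11, h12, hb0]
    · push_neg at hK
      have h8 : Real.exp (η * X n ω) ≤ Real.exp (η * K) :=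
        Real.exp_le_exp.2 (mul_le_mul_of_nonneg_left hK.le hη0.le)
      have h5' : 0 ≤ (μ[(fun ω => Real.exp (η * Δ ω))|ℱ n]) ω := h5
      have h9 : Real.exp (η * X n ω) * (μ[(fun ω => Real.exp (η * Δ ω))|ℱ n]) ω
          ≤ Real.exp (η * K) * Real.exp (η * k) :=
        mul_le_mul h8 h4 h5' (Real.exp_pos _).le
      have h10 : Real.exp (η * K) * Real.exp (η * k) ≤ b := by
        rw [hbdef, mul_comm D]
        exact mul_le_mul_of_nonneg_left hD1 (Real.exp_pos _).le
      have h11 : 0 ≤ ρ * Real.exp (η * X n ω) :=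
        mul_nonneg hρ0.le (Real.exp_pos _).le
      linarith only [h9, h10, h11]
  -- one-step integral inequality
  have hstep : ∀ n, ∫ ω, G (n+1) ω ∂μ ≤ β * ∫ ω, G n ω ∂μ := by
    intro n
    have hFm0 : Measurable (fun ω => Real.exp (θ * T n ω)) := ((hTm n).const_mul θ).exp
    have hFsm : StronglyMeasurable[ℱ n] (fun ω => Real.exp (θ * T n ω)) :=
      (Real.measurable_exp.comp ((hTmF n).const_mul θ)).stronglyMeasurable
    have hFb : ∀ ω, Real.exp (θ * T n ω) ≤ Real.exp (θ*n) :=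
      fun ω => Real.exp_le_exp.2 (mul_le_mul_of_nonneg_left (hTle n ω) hθ0.le)
    have hFint : Integrable (fun ω => Real.exp (θ * T n ω)) μ := by
      apply integrable_of_abs_bound hFm0.aestronglyMeasurable (Cb := Real.exp (θ*n))
      exact Eventually.of_forall fun ω => by
        rw [abs_of_nonneg (Real.exp_pos _).le]; exact hFb ω
    have hFV1int : Integrable
        (fun ω => Real.exp (θ * T n ω) * Real.exp (η * X (n+1) ω)) μ := by
      apply integrable_of_abs_bound
        (hFm0.mul (((hXm (n+1)).const_mul η).exp)).aestronglyMeasurable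
        (Cb := Real.exp (θ*n) * Real.exp (η*(|x0| + (n+1)*k)))
      filter_upwards [habs (n+1)] with ω h
      simp only [Pi.mul_apply]
      rw [abs_of_nonneg (mul_nonneg (Real.exp_pos _).le (Real.exp_pos _).le)]
      have h5 : Real.exp (η * X (n+1) ω) ≤ Real.exp (η*(|x0| + (n+1)*k)) := by
        apply Real.exp_le_exp.2
        apply mul_le_mul_of_nonneg_left _ hη0.le
        calc X (n+1) ω ≤ |X (n+1) ω| := le_abs_self _
          _ ≤ |x0| + (n+1)*k := by push_cast at h ⊢; linarith only [h]
      exact mul_le_mul (hFb ω) h5 (Real.exp_pos _).le (Real.exp_pos _).le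
    have hFVbint : Integrable
        (fun ω => Real.exp (θ * T n ω) * (ρ * Real.exp (η * X n ω) + b)) μ := by
      apply integrable_of_abs_bound
        (hFm0.mul (((((hXm n).const_mul η).exp).const_mul ρ).add_const b)).aestronglyMeasurable
        (Cb := Real.exp (θ*n) * (ρ * Real.exp (η*(|x0| + n*k)) + b))
      filter_upwards [habs n] with ω h
      have h5 : Real.exp (η * X n ω) ≤ Real.exp (η*(|x0| + n*k)) := by
        apply Real.exp_le_exp.2
        exact mul_le_mul_of_nonneg_left (le_trans (le_abs_self _) h) hη0.le
      simp only [Pi.mul_apply]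
      rw [abs_of_nonneg (mul_nonneg (Real.exp_pos _).le
        (add_nonneg (mul_nonneg hρ0.le (Real.exp_pos _).le) hb0.le))]
      apply mul_le_mul (hFb ω) _ (by positivity) (Real.exp_pos _).le
      have h6 := mul_le_mul_of_nonneg_left h5 hρ0.le
      linarith only [h6]
    have hFVaint : Integrable
        (fun ω => Real.exp (θ * T n ω) * ((1+s) * Real.exp (η * X (n+1) ω) + a)) μ := by
      apply integrable_of_abs_bound
        (hFm0.mul (((((hXm (n+1)).const_mul η).exp).const_mul (1+s)).add_const a)).aestronglyMeasurable
        (Cb := Real.exp (θ*n) * ((1+s) * Real.exp (η*(|x0| + (n+1)*k)) + a))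
      filter_upwards [habs (n+1)] with ω h
      have h5 : Real.exp (η * X (n+1) ω) ≤ Real.exp (η*(|x0| + (n+1)*k)) := by
        apply Real.exp_le_exp.2
        apply mul_le_mul_of_nonneg_left _ hη0.le
        calc X (n+1) ω ≤ |X (n+1) ω| := le_abs_self _
          _ ≤ |x0| + (n+1)*k := by push_cast at h ⊢; linarith only [h]
      simp only [Pi.mul_apply]
      rw [abs_of_nonneg (mul_nonneg (Real.exp_pos _).le
        (add_nonneg (mul_nonneg (by linarith only [hs0] : (0:ℝ) ≤ 1+s) (Real.exp_pos _).le) ha0.le))]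
      apply mul_le_mul (hFb ω) _ (by positivity) (Real.exp_pos _).le
      have h6 := mul_le_mul_of_nonneg_left h5 (by linarith only [hs0] : (0:ℝ) ≤ 1+s)
      linarith only [h6]
    -- pointwise inequality A
    have hptA : ∀ ω, G (n+1) ω
        ≤ Real.exp (θ * T n ω) * ((1+s) * Real.exp (η * X (n+1) ω) + a) := by
      intro ω
      have hTsucc : T (n+1) ω = T n ω + (1 - if X (n+1) ω < M then (1:ℝ) else 0) := by
        simp only [hTdef]
        exact Finset.sum_Icc_succ_top (by omega) _
      have hV0 : 0 < Real.exp (η * X (n+1) ω) := Real.exp_pos _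
      simp only [hGdef]
      rw [hTsucc]
      by_cases hM : X (n+1) ω < M
      · rw [if_pos hM]
        norm_num
        apply mul_le_mul_of_nonneg_left _ (Real.exp_pos (θ * T n ω)).le
        have h9 : 0 ≤ s * Real.exp (η * X (n+1) ω) := mul_nonneg hs0.le hV0.le
        nlinarith only [h9]
      · rw [if_neg hM]
        norm_num
        rw [mul_add θ, Real.exp_add, mul_one, mul_assoc]
        apply mul_le_mul_of_nonneg_left _ (Real.exp_pos (θ * T n ω)).le
        have hMX : M ≤ X (n+1) ω := not_lt.1 hM
        have hVM : Real.exp (η*M) ≤ Real.exp (η * X (n+1) ω) :=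
          Real.exp_le_exp.2 (mul_le_mul_of_nonneg_left hMX hη0.le)
        have e3 : Real.exp θ * (Real.exp (η * X (n+1) ω) + a)
            - ((1+s) * Real.exp (η * X (n+1) ω) + a)
            = (Real.exp θ - 1) * (α * Real.exp (η*M) - α * Real.exp (η * X (n+1) ω)) := by
          rw [hsdef, hadef]; ring
        have e4 : α * Real.exp (η*M) - α * Real.exp (η * X (n+1) ω) ≤ 0 := by
          have h7 := mul_le_mul_of_nonneg_left hVM hα0.le
          linarith only [h7]
        have e5 : (Real.exp θ - 1) * (α * Real.exp (η*M) - α * Real.exp (η * X (n+1) ω)) ≤ 0 :=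
          mul_nonpos_of_nonneg_of_nonpos (by linarith only [heθ1]) e4
        linarith only [e3, e5]
    -- the conditional expectation step
    have hpull2 := condExp_mul_of_stronglyMeasurable_left (g := fun ω => Real.exp (η * X (n+1) ω))
      hFsm (by exact hFV1int) (hVint (n+1))
    have e1 := integral_condExp (μ := μ)
      (f := (fun ω => Real.exp (θ * T n ω)) * (fun ω => Real.exp (η * X (n+1) ω))) (ℱ.le n)
    have e2 := integral_congr_ae hpull2
    have e3int : Integrable
        ((fun ω => Real.exp (θ * T n ω)) * μ[fun ω => Real.exp (η * X (n+1) ω)|ℱ n]) μ :=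
      integrable_condExp.congr hpull2
    have e4 : ∫ ω, Real.exp (θ * T n ω) * (μ[fun ω => Real.exp (η * X (n+1) ω)|ℱ n]) ω ∂μ
        ≤ ∫ ω, Real.exp (θ * T n ω) * (ρ * Real.exp (η * X n ω) + b) ∂μ := by
      apply integral_mono_ae e3int hFVbint
      filter_upwards [hcond n] with ω h
      exact mul_le_mul_of_nonneg_left h (Real.exp_pos _).le
    have hI3 : ∫ ω, Real.exp (θ * T n ω) * Real.exp (η * X (n+1) ω) ∂μ
        ≤ ∫ ω, Real.exp (θ * T n ω) * (ρ * Real.exp (η * X n ω) + b) ∂μ := by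
      calc ∫ ω, Real.exp (θ * T n ω) * Real.exp (η * X (n+1) ω) ∂μ
          = ∫ ω, (μ[(fun ω => Real.exp (θ * T n ω)) * (fun ω => Real.exp (η * X (n+1) ω))|ℱ n]) ω ∂μ := e1.symm
        _ = ∫ ω, Real.exp (θ * T n ω) * (μ[fun ω => Real.exp (η * X (n+1) ω)|ℱ n]) ω ∂μ := e2
        _ ≤ _ := e4
    -- combine integrals
    have hI1 : ∫ ω, G (n+1) ω ∂μ
        ≤ ∫ ω, Real.exp (θ * T n ω) * ((1+s) * Real.exp (η * X (n+1) ω) + a) ∂μ :=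
      integral_mono (hGint (n+1)) hFVaint hptA
    have hI2 : ∫ ω, Real.exp (θ * T n ω) * ((1+s) * Real.exp (η * X (n+1) ω) + a) ∂μ
        = (1+s) * ∫ ω, Real.exp (θ * T n ω) * Real.exp (η * X (n+1) ω) ∂μ
          + a * ∫ ω, Real.exp (θ * T n ω) ∂μ := by
      have h7 : ∫ ω, Real.exp (θ * T n ω) * ((1+s) * Real.exp (η * X (n+1) ω) + a) ∂μ
          = ∫ ω, ((1+s) * (Real.exp (θ * T n ω) * Real.exp (η * X (n+1) ω))
              + a * Real.exp (θ * T n ω)) ∂μ := by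
        congr 1
        funext ω
        ring
      rw [h7]
      exact (integral_add (hFV1int.const_mul (1+s)) (hFint.const_mul a)).trans
        (by rw [integral_const_mul, integral_const_mul])
    have hI4 : (1+s) * (∫ ω, Real.exp (θ * T n ω) * (ρ * Real.exp (η * X n ω) + b) ∂μ)
          + a * ∫ ω, Real.exp (θ * T n ω) ∂μ
        = ∫ ω, Real.exp (θ * T n ω) * ((1+s) * (ρ * Real.exp (η * X n ω) + b) + a) ∂μ := by
      have h7 : ∫ ω, Real.exp (θ * T n ω) * ((1+s) * (ρ * Real.exp (η * X n ω) + b) + a) ∂μ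
          = ∫ ω, ((1+s) * (Real.exp (θ * T n ω) * (ρ * Real.exp (η * X n ω) + b))
              + a * Real.exp (θ * T n ω)) ∂μ := by
        congr 1
        funext ω
        ring
      refine ((integral_add (hFVbint.const_mul (1+s)) (hFint.const_mul a)).trans
        (by rw [integral_const_mul, integral_const_mul])).symm.trans h7.symm
    have hFVcint : Integrable
        (fun ω => Real.exp (θ * T n ω) * ((1+s) * (ρ * Real.exp (η * X n ω) + b) + a)) μ := by
      have : (fun ω => Real.exp (θ * T n ω) * ((1+s) * (ρ * Real.exp (η * X n ω) + b) + a))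
          = (fun ω => (1+s) * (Real.exp (θ * T n ω) * (ρ * Real.exp (η * X n ω) + b))
             + a * Real.exp (θ * T n ω)) := by
        funext ω; ring
      rw [this]
      exact (hFVbint.const_mul (1+s)).add (hFint.const_mul a)
    have hI5 : ∫ ω, Real.exp (θ * T n ω) * ((1+s) * (ρ * Real.exp (η * X n ω) + b) + a) ∂μ
        ≤ ∫ ω, β * G n ω ∂μ := by
      apply integral_mono hFVcint ((hGint n).const_mul β)
      intro ω
      simp only [hGdef]
      have inner : (1+s) * (ρ * Real.exp (η * X n ω) + b) + a
          ≤ β * (Real.exp (η * X n ω) + a) := by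
        have e6 : (1+s) * (ρ * Real.exp (η * X n ω) + b) + a
            = β * Real.exp (η * X n ω) + ((1+s)*b + a) := by
          rw [hβdef]; ring
        have e7 : β * (Real.exp (η * X n ω) + a) = β * Real.exp (η * X n ω) + β * a := by ring
        rw [e6, e7]
        have e8 : (β-1)*a = β*a - a := by ring
        linarith only [hba, e8]
      calc Real.exp (θ * T n ω) * ((1+s) * (ρ * Real.exp (η * X n ω) + b) + a)
          ≤ Real.exp (θ * T n ω) * (β * (Real.exp (η * X n ω) + a)) :=
            mul_le_mul_of_nonneg_left inner (Real.exp_pos _).le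
        _ = β * (Real.exp (θ * T n ω) * (Real.exp (η * X n ω) + a)) := by ring
    have hI6 : ∫ ω, β * G n ω ∂μ = β * ∫ ω, G n ω ∂μ := integral_const_mul β _
    have hmul3 := mul_le_mul_of_nonneg_left hI3 (by linarith only [hs0] : (0:ℝ) ≤ 1+s)
    linarith only [hI1, hI2, hI4, hI5, hI6, hmul3]
  -- induction bound
  have hGbound : ∀ n, ∫ ω, G n ω ∂μ ≤ (Real.exp (η*x0) + a) * β^n := by
    intro n
    induction n with
    | zero =>
      have hT0' : ∀ ω, T 0 ω = 0 := by
        intro ω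
        simp only [hTdef]
        rw [Finset.Icc_eq_empty (by omega)]
        simp
      have h0 : ∫ ω, G 0 ω ∂μ = Real.exp (η*x0) + a := by
        have heq : G 0 =ᵐ[μ] fun _ => Real.exp (η*x0) + a := by
          filter_upwards [hX0] with ω h
          simp only [hGdef]
          rw [hT0' ω, h]
          simp
        rw [integral_congr_ae heq, integral_const]
        simp
      rw [h0, pow_zero, mul_one]
    | succ m ih =>
      calc ∫ ω, G (m+1) ω ∂μ ≤ β * ∫ ω, G m ω ∂μ := hstep m
        _ ≤ β * ((Real.exp (η*x0) + a) * β^m) := mul_le_mul_of_nonneg_left ih hβ0.le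
        _ = (Real.exp (η*x0) + a) * β^(m+1) := by ring
  -- conclusion
  refine ⟨(Real.exp (η*x0) + a)/a, β * Real.exp (-(θ*t)), ?_, ?_, ?_⟩
  · positivity
  · exact hB
  · intro n hn
    have hn0 : (0:ℝ) < n := by exact_mod_cast Nat.pos_of_ne_zero (by omega)
    set EV := {ω | (1 / (n : ℝ)) * ∑ j ∈ Finset.Icc 1 n,
        (if X j ω < M then (1 : ℝ) else 0) ≤ p₀ * (1 - ε')} with hEVdef
    have hEVmeas : MeasurableSet EV := by
      apply measurableSet_le _ measurable_const
      apply Measurable.const_mul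
      apply Finset.measurable_sum
      intro j _
      exact Measurable.ite (measurableSet_lt (hXm j) measurable_const)
        measurable_const measurable_const
    have hTev : ∀ ω ∈ EV, t * n ≤ T n ω := by
      intro ω hω
      simp only [hEVdef, Set.mem_setOf_eq] at hω
      have hTS : T n ω = (n:ℝ) - ∑ j ∈ Finset.Icc 1 n,
          (if X j ω < M then (1:ℝ) else 0) := by
        simp only [hTdef]
        rw [Finset.sum_sub_distrib]
        simp
      have hS : ∑ j ∈ Finset.Icc 1 n, (if X j ω < M then (1:ℝ) else 0)
          ≤ (n:ℝ) * (p₀ * (1 - ε')) := by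
        have h2 := mul_le_mul_of_nonneg_left hω hn0.le
        have e : (n:ℝ) * (1/(n:ℝ) * ∑ j ∈ Finset.Icc 1 n,
            (if X j ω < M then (1:ℝ) else 0)) = ∑ j ∈ Finset.Icc 1 n,
            (if X j ω < M then (1:ℝ) else 0) := by
          field_simp
        rwa [e] at h2
      have hmono : (n:ℝ) * (p₀ * (1 - ε')) ≤ (n:ℝ) * (p₀ * (1 - ε'')) := by
        apply mul_le_mul_of_nonneg_left _ hn0.le
        exact mul_le_mul_of_nonneg_left (by linarith only [hε''ε] : (1:ℝ)-ε' ≤ 1-ε'') hp₀pos.le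
      rw [hTS, htdef]
      have : (1 - p₀ * (1 - ε'')) * (n:ℝ) = (n:ℝ) - (n:ℝ) * (p₀ * (1-ε'')) := by ring
      rw [this]
      linarith only [hS, hmono]
    have hGev : ∀ ω ∈ EV, Real.exp (θ*(t*n)) * a ≤ G n ω := by
      intro ω hω
      simp only [hGdef]
      have h1 : Real.exp (θ*(t*n)) ≤ Real.exp (θ * T n ω) :=
        Real.exp_le_exp.2 (mul_le_mul_of_nonneg_left (hTev ω hω) hθ0.le)
      have h2 : a ≤ Real.exp (η * X n ω) + a := by linarith only [Real.exp_pos (η * X n ω)]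
      exact mul_le_mul h1 h2 ha0.le (Real.exp_pos _).le
    have hmark : (μ EV).toReal * (Real.exp (θ*(t*n)) * a) ≤ (Real.exp (η*x0) + a) * β^n := by
      have h1 : ∫ _ω in EV, (Real.exp (θ*(t*n)) * a) ∂μ ≤ ∫ ω in EV, G n ω ∂μ :=
        setIntegral_mono_on (integrable_const _).integrableOn
          ((hGint n).integrableOn) hEVmeas (fun ω hω => hGev ω hω)
      have h2 : ∫ ω in EV, G n ω ∂μ ≤ ∫ ω, G n ω ∂μ := by
        apply setIntegral_le_integral (hGint n)
        exact Eventually.of_forall fun ω => by simp only [hGdef]; positivity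
      have h3 : ∫ _ω in EV, (Real.exp (θ*(t*n)) * a) ∂μ
          = (μ EV).toReal * (Real.exp (θ*(t*n)) * a) := by
        rw [setIntegral_const, smul_eq_mul]; rfl
      linarith only [hGbound n, h1, h2, h3]
    have hexpn : (Real.exp (-(θ*t)))^n = (Real.exp (θ*(t*n)))⁻¹ := by
      rw [← Real.exp_nat_mul, ← Real.exp_neg]
      congr 1
      push_cast
      ring
    have hfin : (μ EV).toReal
        ≤ ((Real.exp (η*x0) + a) * β^n) / (Real.exp (θ*(t*n)) * a) := by
      rw [le_div_iff₀ (by positivity)]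
      exact hmark
    calc (μ EV).toReal ≤ ((Real.exp (η*x0) + a) * β^n) / (Real.exp (θ*(t*n)) * a) := hfin
      _ = (Real.exp (η*x0) + a)/a * (β * Real.exp (-(θ*t)))^n := by
          have hx : (β * Real.exp (-(θ*t)))^n = β^n * (Real.exp (θ*(t*n)))⁻¹ := by
            rw [mul_pow, hexpn]
          rw [hx]
          field_simp
end
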